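/- arXiv:1507.01934 — 8 statements merged into one kernel-verified Lean document; each statement's English description precedes it below -/
import Mathlib

section
/- Let G be a digraph, k a positive integer, and (S,T) a k-admissible pair of vertex sets with |V(G) ∖ (S ∪ T)| ≤ k + 1. Then G has a gapless S–T separation chain of order at most k. -/
namespace AlmostSemicomplete

variable {V : Type} [Fintype V] [DecidableEq V]

/-- The closed out-neighborhood `N⁺[U]`. -/
def closedOut (E : V → V → Prop) [DecidableRel E] (U : Finset V) : Finset V :=
  U.biUnion fun u => insert u (Finset.univ.filter fun w => E u w)

/-- The closed in-neighborhood `N⁻[U]`. -/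
def closedIn (E : V → V → Prop) [DecidableRel E] (U : Finset V) : Finset V :=
  U.biUnion fun u => insert u (Finset.univ.filter fun w => E w u)

/-- The open out-neighborhood `N⁺(U)`. -/
def openOut (E : V → V → Prop) [DecidableRel E] (U : Finset V) : Finset V :=
  closedOut E U \ U

/-- The open in-neighborhood `N⁻(U)`. -/
def openIn (E : V → V → Prop) [DecidableRel E] (U : Finset V) : Finset V :=
  closedIn E U \ U

/-- `d⁺(U)`, the number of out-neighbors of the set `U`. -/
def dOut (E : V → V → Prop) [DecidableRel E] (U : Finset V) : ℕ := (openOut E U).card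

/-- `d⁻(U)`, the number of in-neighbors of the set `U`. -/
def dIn (E : V → V → Prop) [DecidableRel E] (U : Finset V) : ℕ := (openIn E U).card

/-- Out-neighbors of a vertex. -/
def NoutV (E : V → V → Prop) [DecidableRel E] (v : V) : Finset V :=
  Finset.univ.filter fun w => E v w

/-- In-neighbors of a vertex. -/
def NinV (E : V → V → Prop) [DecidableRel E] (v : V) : Finset V :=
  Finset.univ.filter fun w => E w v

/-- Out-degree of a vertex. -/
def dOutV (E : V → V → Prop) [DecidableRel E] (v : V) : ℕ := (NoutV E v).card

/-- In-degree of a vertex. -/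
def dInV (E : V → V → Prop) [DecidableRel E] (v : V) : ℕ := (NinV E v).card

/-- A separation of a digraph: `A ∪ B = V` and no edge from `A ∖ B` to `B ∖ A`. -/
def IsSep (E : V → V → Prop) (A B : Finset V) : Prop :=
  A ∪ B = Finset.univ ∧ ∀ a ∈ A, a ∉ B → ∀ b ∈ B, b ∉ A → ¬ E a b

/-- An `S`–`T` separation. -/
def IsSTSep (E : V → V → Prop) (S T A B : Finset V) : Prop :=
  IsSep E A B ∧ S ∩ B = ∅ ∧ T ∩ A = ∅

/-- A minimum `S`–`T` separation, i.e. one of smallest order `|A ∩ B|`. -/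
def IsMinSTSep (E : V → V → Prop) (S T X Y : Finset V) : Prop :=
  IsSTSep E S T X Y ∧ ∀ A B : Finset V, IsSTSep E S T A B → (X ∩ Y).card ≤ (A ∩ B).card

/-- A separation chain: a list of separations with the first components nondecreasing
and the second components nonincreasing. -/
def IsSepChain (E : V → V → Prop) (C : List (Finset V × Finset V)) : Prop :=
  (∀ p ∈ C, IsSep E p.1 p.2) ∧ List.Chain' (fun p q => p.1 ⊆ q.1 ∧ q.2 ⊆ p.2) C

/-- A separation chain is gapless if consecutive separations differ by at most one vertex
on at least one side. -/
def Gapless (C : List (Finset V × Finset V)) : Prop :=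
  List.Chain' (fun p q => (q.1 \ p.1).card ≤ 1 ∨ (p.2 \ q.2).card ≤ 1) C

/-- A separation chain is nice if consecutive separations differ by at most one vertex
on both sides. -/
def Nice (C : List (Finset V × Finset V)) : Prop :=
  List.Chain' (fun p q => (q.1 \ p.1).card ≤ 1 ∧ (p.2 \ q.2).card ≤ 1) C

/-- An `S`–`T` chain: a separation chain whose first separation has second component
`V ∖ S` and whose last separation has first component `V ∖ T`. -/
def IsSTChain (E : V → V → Prop) (S T : Finset V) (C : List (Finset V × Finset V)) : Prop :=
  IsSepChain E C ∧ C.head?.map Prod.snd = some (Finset.univ \ S) ∧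
    C.getLast?.map Prod.fst = some (Finset.univ \ T)

/-- An `S`–`T` chain is tight if `A_0 = N⁺[S]` and `B_r = N⁻[T]`. -/
def Tight (E : V → V → Prop) [DecidableRel E] (S T : Finset V)
    (C : List (Finset V × Finset V)) : Prop :=
  C.head?.map Prod.fst = some (closedOut E S) ∧
    C.getLast?.map Prod.snd = some (closedIn E T)

/-- The order of a separation chain: the maximum order of its member separations. -/
def chainOrder (C : List (Finset V × Finset V)) : ℕ :=
  (C.map fun p => (p.1 ∩ p.2).card).foldr max 0

/-- The chain has order at most `k`. -/
def orderLE (C : List (Finset V × Finset V)) (k : ℕ) : Prop :=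
  ∀ p ∈ C, (p.1 ∩ p.2).card ≤ k

/-- A path decomposition of a digraph. -/
def IsPathDecomp {m : ℕ} (E : V → V → Prop) (X : Fin m → Finset V) : Prop :=
  (∀ v : V, ∃ i, v ∈ X i) ∧
  (∀ u v : V, E u v → ∃ i j : Fin m, j ≤ i ∧ u ∈ X i ∧ v ∈ X j) ∧
  (∀ (v : V) (i j k : Fin m), i ≤ j → j ≤ k → v ∈ X i → v ∈ X k → v ∈ X j)

/-- The width of a path decomposition: maximum bag size minus one. -/
def pdWidth {m : ℕ} (X : Fin m → Finset V) : ℕ :=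
  (Finset.univ.sup fun i => (X i).card) - 1

/-- The pathwidth of a digraph. -/
noncomputable def pathwidth (E : V → V → Prop) : ℕ :=
  sInf {k | ∃ (m : ℕ) (X : Fin m → Finset V), IsPathDecomp E X ∧ pdWidth X = k}

/-- An `h`-semicomplete digraph: every vertex has at most `h` non-neighbors. -/
def HSemicomplete (E : V → V → Prop) [DecidableRel E] (h : ℕ) : Prop :=
  ∀ v : V, (Finset.univ.filter fun u => u ≠ v ∧ ¬ E u v ∧ ¬ E v u).card ≤ h

/-- A semicomplete digraph: between any two distinct vertices there is an edge in
at least one direction. -/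
def Semicomplete (E : V → V → Prop) : Prop := ∀ u v : V, u ≠ v → E u v ∨ E v u

/-- A `k`-admissible pair `(S, T)`. -/
def kAdmissible (E : V → V → Prop) [DecidableRel E] (k : ℕ) (S T : Finset V) : Prop :=
  closedOut E S ∩ T = ∅ ∧ dOut E S ≤ k ∧ dIn E T ≤ k

/-- The potential `μ(S,T) = 2|V ∖ (N⁺[S] ∪ N⁻[T])| + |N⁺(S) Δ N⁻(T)|`. -/
def mu (E : V → V → Prop) [DecidableRel E] (S T : Finset V) : ℕ :=
  2 * (Finset.univ \ (closedOut E S ∪ closedIn E T)).card +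
    (symmDiff (openOut E S) (openIn E T)).card

/-- The wildness of a vertex. -/
def wld (E : V → V → Prop) [DecidableRel E] (v : V) : ℕ :=
  ((Finset.univ.filter fun u => dOutV E u ≤ dOutV E v) \ NoutV E v).card

/-- A `(d, l, k)`-degree tangle. -/
def IsDegTangle (E : V → V → Prop) [DecidableRel E] (d l k : ℕ) (T : Finset V) : Prop :=
  T.card = l ∧ ∀ v ∈ T, d ≤ dOutV E v ∧ dOutV E v ≤ d + k

/-- A `(d, l, k)`-matching tangle. -/
def IsMatchTangle (E : V → V → Prop) [DecidableRel E] (d l k : ℕ)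
    (T₁ T₂ : Finset V) : Prop :=
  T₁.card = l ∧ T₂.card = l ∧ (∀ v ∈ T₁, dOutV E v ≤ d) ∧
    (∀ v ∈ T₂, d + k + 1 ≤ dOutV E v) ∧
    ∃ φ : V → V, Set.BijOn φ ↑T₁ ↑T₂ ∧ ∀ v ∈ T₁, E v (φ v)

/-- A `(d, l, w)`-spider. -/
def IsSpider (E : V → V → Prop) [DecidableRel E] (d l w : ℕ) (T : Finset V)
    (L R : V → Finset V) : Prop :=
  l ≤ T.card ∧ ∀ v ∈ T,
    L v ⊆ NinV E v ∧ 3 * l ≤ (L v).card ∧ (∀ u ∈ L v, dOutV E u ≤ d) ∧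
    R v ⊆ NoutV E v ∧ 3 * l ≤ (R v).card ∧ (∀ u ∈ R v, d + w ≤ dOutV E u)

/-- Tameness of a left-side vertex of a `(d,l,w)`-spider:
`wld(u) ≤ 3l + d + w − d⁺(u) + 2·pw(G)`, stated additively. -/
def LeftTame (E : V → V → Prop) [DecidableRel E] (d l w : ℕ) (u : V) : Prop :=
  wld E u + dOutV E u ≤ 3 * l + d + w + 2 * pathwidth E

/-- Tameness of a right-side vertex of a `(d,l,w)`-spider:
`wld(u) ≤ 3l + d⁺(u) − d + 2·pw(G)`, stated additively. -/
def RightTame (E : V → V → Prop) [DecidableRel E] (d l w : ℕ) (u : V) : Prop :=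
  wld E u + d ≤ 3 * l + dOutV E u + 2 * pathwidth E

/-- A tame `(d, l, w)`-spider: each `L_v` and each `R_v` contains at least `2l`
tame vertices. -/
def IsTameSpider (E : V → V → Prop) [DecidableRel E] (d l w : ℕ) (T : Finset V)
    (L R : V → Finset V) : Prop :=
  IsSpider E d l w T L R ∧ ∀ v ∈ T,
    (∃ L' ⊆ L v, 2 * l ≤ L'.card ∧ ∀ u ∈ L', LeftTame E d l w u) ∧
    (∃ R' ⊆ R v, 2 * l ≤ R'.card ∧ ∀ u ∈ R', RightTame E d l w u)


lemma mem_closedOut' {E : V → V → Prop} [DecidableRel E] {U : Finset V} {v : V} :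
    v ∈ closedOut E U ↔ v ∈ U ∨ ∃ u ∈ U, E u v := by
  simp only [closedOut, Finset.mem_biUnion, Finset.mem_insert, Finset.mem_filter,
    Finset.mem_univ, true_and]
  constructor
  · rintro ⟨u, hu, rfl | h⟩
    · exact Or.inl hu
    · exact Or.inr ⟨u, hu, h⟩
  · rintro (h | ⟨u, hu, h⟩)
    · exact ⟨v, h, Or.inl rfl⟩
    · exact ⟨u, hu, Or.inr h⟩

lemma mem_closedIn' {E : V → V → Prop} [DecidableRel E] {U : Finset V} {v : V} :
    v ∈ closedIn E U ↔ v ∈ U ∨ ∃ u ∈ U, E v u := by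
  simp only [closedIn, Finset.mem_biUnion, Finset.mem_insert, Finset.mem_filter,
    Finset.mem_univ, true_and]
  constructor
  · rintro ⟨u, hu, rfl | h⟩
    · exact Or.inl hu
    · exact Or.inr ⟨u, hu, h⟩
  · rintro (h | ⟨u, hu, h⟩)
    · exact ⟨v, h, Or.inl rfl⟩
    · exact ⟨u, hu, Or.inr h⟩

/-- If `(S,T)` is `k`-admissible and `|V ∖ (S ∪ T)| ≤ k + 1`, then `G` has a gapless
`S`–`T` chain of order at most `k`. -/
theorem gapless_chain_of_small_middle (E : V → V → Prop) [DecidableRel E]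
    (hirr : Irreflexive E) (k : ℕ) (hk : 0 < k) (S T : Finset V)
    (hadm : kAdmissible E k S T)
    (hsmall : (Finset.univ \ (S ∪ T)).card ≤ k + 1) :
    ∃ C : List (Finset V × Finset V), IsSTChain E S T C ∧ Gapless C ∧ orderLE C k := by
  obtain ⟨hadm1, hadm2, hadm3⟩ := hadm
  set M : Finset V := Finset.univ \ (S ∪ T) with hMdef
  have hMmem : ∀ v : V, v ∈ M ↔ v ∉ S ∧ v ∉ T := by
    intro v; simp [hMdef, not_or]
  have hOutT : ∀ v ∈ closedOut E S, v ∉ T := by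
    intro v hv hvT
    have : v ∈ closedOut E S ∩ T := Finset.mem_inter.2 ⟨hv, hvT⟩
    rw [hadm1] at this; exact absurd this (Finset.notMem_empty v)
  have hST : ∀ v ∈ S, v ∉ T := fun v hv => hOutT v (mem_closedOut'.2 (Or.inl hv))
  have hSnE : ∀ s ∈ S, ∀ t ∈ T, ¬ E s t := fun s hs t ht hE =>
    hOutT t (mem_closedOut'.2 (Or.inr ⟨s, hs, hE⟩)) ht
  have hInS : ∀ v ∈ closedIn E T, v ∉ S := by
    intro v hv hvS
    rcases mem_closedIn'.1 hv with h | ⟨t, ht, hE⟩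
    · exact hST v hvS h
    · exact hSnE v hvS t ht hE
  have hOpenOutM : openOut E S ⊆ M := by
    intro v hv
    rw [openOut, Finset.mem_sdiff] at hv
    exact (hMmem v).2 ⟨hv.2, hOutT v hv.1⟩
  have hOpenInM : openIn E T ⊆ M := by
    intro v hv
    rw [openIn, Finset.mem_sdiff] at hv
    exact (hMmem v).2 ⟨hInS v hv.1, hv.2⟩
  -- intersections at the ends
  have h0 : closedOut E S ∩ (Finset.univ \ S) = openOut E S := by
    ext v; simp [openOut, Finset.mem_sdiff, Finset.mem_inter, and_comm]
  have h3 : (Finset.univ \ T) ∩ closedIn E T = openIn E T := by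
    ext v
    simp only [Finset.mem_inter, Finset.mem_sdiff, Finset.mem_univ, true_and, openIn]
    tauto
  -- the two end separations
  have sep0 : IsSep E (closedOut E S) (Finset.univ \ S) := by
    constructor
    · ext v
      simp only [Finset.mem_union, Finset.mem_sdiff, Finset.mem_univ, true_and, iff_true]
      by_cases hv : v ∈ S
      · exact Or.inl (mem_closedOut'.2 (Or.inl hv))
      · exact Or.inr hv
    · intro a _ ha2 b _ hb2 hE
      simp only [Finset.mem_sdiff, Finset.mem_univ, true_and, not_not] at ha2
      exact hb2 (mem_closedOut'.2 (Or.inr ⟨a, ha2, hE⟩))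
  have sep3 : IsSep E (Finset.univ \ T) (closedIn E T) := by
    constructor
    · ext v
      simp only [Finset.mem_union, Finset.mem_sdiff, Finset.mem_univ, true_and, iff_true]
      by_cases hv : v ∈ T
      · exact Or.inr (mem_closedIn'.2 (Or.inl hv))
      · exact Or.inl hv
    · intro a _ ha2 b _ hb2 hE
      simp only [Finset.mem_sdiff, Finset.mem_univ, true_and, not_not] at hb2
      exact ha2 (mem_closedIn'.2 (Or.inr ⟨b, hb2, hE⟩))
  have hCOsubT : closedOut E S ⊆ Finset.univ \ T := by
    intro v hv
    simp only [Finset.mem_sdiff, Finset.mem_univ, true_and]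
    exact hOutT v hv
  have hCIsubS : closedIn E T ⊆ Finset.univ \ S := by
    intro v hv
    simp only [Finset.mem_sdiff, Finset.mem_univ, true_and]
    exact hInS v hv
  by_cases hMk : M.card ≤ k
  · -- small middle: three-element chain through (V∖T, V∖S)
    refine ⟨[(closedOut E S, Finset.univ \ S), (Finset.univ \ T, Finset.univ \ S),
        (Finset.univ \ T, closedIn E T)], ⟨⟨?_, ?_⟩, ?_, ?_⟩, ?_, ?_⟩
    · intro p hp
      simp only [List.mem_cons, List.not_mem_nil, or_false] at hp
      rcases hp with rfl | rfl | rfl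
      · exact sep0
      · constructor
        · ext v
          simp only [Finset.mem_union, Finset.mem_sdiff, Finset.mem_univ, true_and, iff_true]
          by_cases hv : v ∈ T
          · exact Or.inr fun h => hST v h hv
          · exact Or.inl hv
        · intro a ha1 ha2 b hb1 hb2 hE
          simp only [Finset.mem_sdiff, Finset.mem_univ, true_and, not_not] at ha2 hb2 ha1 hb1
          exact hSnE a ha2 b hb2 hE
      · exact sep3
    · refine List.isChain_cons_cons.2 ⟨⟨hCOsubT, subset_rfl⟩, List.isChain_cons_cons.2
        ⟨⟨subset_rfl, hCIsubS⟩, List.isChain_singleton _⟩⟩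
    · rfl
    · rfl
    · refine List.isChain_cons_cons.2 ⟨Or.inr ?_, List.isChain_cons_cons.2 ⟨Or.inl ?_, List.isChain_singleton _⟩⟩
      · simp
      · simp
    · intro p hp
      simp only [List.mem_cons, List.not_mem_nil, or_false] at hp
      rcases hp with rfl | rfl | rfl
      · rw [h0]; exact hadm2
      · have : (Finset.univ \ T) ∩ (Finset.univ \ S) = M := by
          ext v
          simp only [Finset.mem_inter, Finset.mem_sdiff, Finset.mem_univ, true_and, hMmem]
          tauto
        rw [this]; exact hMk
      · rw [h3]; exact hadm3
  · -- |M| = k + 1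
    have hMcard : M.card = k + 1 := le_antisymm hsmall (Nat.succ_le_of_lt (not_le.1 hMk))
    obtain ⟨ma, hma⟩ : (M \ openIn E T).Nonempty := by
      rw [Finset.sdiff_nonempty]
      intro h
      exact hMk (le_trans (Finset.card_le_card h) hadm3)
    obtain ⟨mb, hmb⟩ : (M \ openOut E S).Nonempty := by
      rw [Finset.sdiff_nonempty]
      intro h
      exact hMk (le_trans (Finset.card_le_card h) hadm2)
    rw [Finset.mem_sdiff] at hma hmb
    have hOOsub : openOut E S ⊆ M.erase mb := by
      intro v hv
      exact Finset.mem_erase.2 ⟨fun h => hmb.2 (h ▸ hv), hOpenOutM hv⟩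
    have hOIsub : openIn E T ⊆ M.erase ma := by
      intro v hv
      exact Finset.mem_erase.2 ⟨fun h => hma.2 (h ▸ hv), hOpenInM hv⟩
    have hCOsub : closedOut E S ⊆ S ∪ M.erase mb := by
      intro v hv
      by_cases hvS : v ∈ S
      · exact Finset.mem_union_left _ hvS
      · exact Finset.mem_union_right _ (hOOsub (Finset.mem_sdiff.2 ⟨hv, hvS⟩))
    have hCIsub : closedIn E T ⊆ T ∪ M.erase ma := by
      intro v hv
      by_cases hvT : v ∈ T
      · exact Finset.mem_union_left _ hvT
      · exact Finset.mem_union_right _ (hOIsub (Finset.mem_sdiff.2 ⟨hv, hvT⟩))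
    have hMnoS : ∀ v ∈ M, v ∉ S := fun v hv => ((hMmem v).1 hv).1
    have hMnoT : ∀ v ∈ M, v ∉ T := fun v hv => ((hMmem v).1 hv).2
    refine ⟨[(closedOut E S, Finset.univ \ S),
        (S ∪ M.erase mb, Finset.univ \ S),
        (Finset.univ \ T, T ∪ M.erase ma),
        (Finset.univ \ T, closedIn E T)], ⟨⟨?_, ?_⟩, ?_, ?_⟩, ?_, ?_⟩
    · intro p hp
      simp only [List.mem_cons, List.not_mem_nil, or_false] at hp
      rcases hp with rfl | rfl | rfl | rfl
      · exact sep0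
      · constructor
        · ext v
          simp only [Finset.mem_union, Finset.mem_sdiff, Finset.mem_univ, true_and, iff_true]
          by_cases hv : v ∈ S
          · exact Or.inl (Or.inl hv)
          · exact Or.inr hv
        · intro a ha1 ha2 b hb1 hb2 hE
          simp only [Finset.mem_sdiff, Finset.mem_univ, true_and, not_not] at ha2 hb2
          have : b ∈ closedOut E S := mem_closedOut'.2 (Or.inr ⟨a, ha2, hE⟩)
          exact hb2 (hCOsub this)
      · constructor
        · ext v
          simp only [Finset.mem_union, Finset.mem_sdiff, Finset.mem_univ, true_and, iff_true]
          by_cases hv : v ∈ T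
          · exact Or.inr (Or.inl hv)
          · exact Or.inl hv
        · intro a ha1 ha2 b hb1 hb2 hE
          simp only [Finset.mem_sdiff, Finset.mem_univ, true_and, not_not] at ha1 hb2
          have : a ∈ closedIn E T := mem_closedIn'.2 (Or.inr ⟨b, hb2, hE⟩)
          exact ha2 (hCIsub this)
      · exact sep3
    · refine List.isChain_cons_cons.2 ⟨⟨hCOsub, subset_rfl⟩, List.isChain_cons_cons.2 ⟨⟨?_, ?_⟩,
        List.isChain_cons_cons.2 ⟨⟨subset_rfl, hCIsub⟩, List.isChain_singleton _⟩⟩⟩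
      · intro v hv
        simp only [Finset.mem_sdiff, Finset.mem_univ, true_and]
        rcases Finset.mem_union.1 hv with h | h
        · exact hST v h
        · exact hMnoT v (Finset.mem_of_mem_erase h)
      · intro v hv
        simp only [Finset.mem_sdiff, Finset.mem_univ, true_and]
        rcases Finset.mem_union.1 hv with h | h
        · exact fun hvS => hST v hvS h
        · exact hMnoS v (Finset.mem_of_mem_erase h)
    · rfl
    · rfl
    · refine List.isChain_cons_cons.2 ⟨Or.inr ?_, List.isChain_cons_cons.2 ⟨Or.inl ?_,
        List.isChain_cons_cons.2 ⟨Or.inl ?_, List.isChain_singleton _⟩⟩⟩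
      · simp
      · calc ((Finset.univ \ T) \ (S ∪ M.erase mb)).card ≤ ({mb} : Finset V).card := by
              apply Finset.card_le_card
              intro v hv
              simp only [Finset.mem_sdiff, Finset.mem_univ, true_and, Finset.mem_union,
                not_or, Finset.mem_erase, not_and] at hv
              obtain ⟨hvT, hvS, hvE⟩ := hv
              have hvM : v ∈ M := (hMmem v).2 ⟨hvS, hvT⟩
              simp only [Finset.mem_singleton]
              by_contra hne
              exact (hvE hne) hvM
            _ ≤ 1 := by simp
      · simp
    · intro p hp
      simp only [List.mem_cons, List.not_mem_nil, or_false] at hp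
      rcases hp with rfl | rfl | rfl | rfl
      · rw [h0]; exact hadm2
      · have : (S ∪ M.erase mb) ∩ (Finset.univ \ S) = M.erase mb := by
          ext v
          simp only [Finset.mem_inter, Finset.mem_union, Finset.mem_sdiff, Finset.mem_univ,
            true_and, Finset.mem_erase]
          constructor
          · rintro ⟨h1 | h1, h2⟩
            · exact absurd h1 h2
            · exact h1
          · intro h
            exact ⟨Or.inr h, hMnoS v h.2⟩
        rw [this, Finset.card_erase_of_mem hmb.1, hMcard]
        simp
      · have : (Finset.univ \ T) ∩ (T ∪ M.erase ma) = M.erase ma := by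
          ext v
          simp only [Finset.mem_inter, Finset.mem_union, Finset.mem_sdiff, Finset.mem_univ,
            true_and, Finset.mem_erase]
          constructor
          · rintro ⟨h2, h1 | h1⟩
            · exact absurd h1 h2
            · exact h1
          · intro h
            exact ⟨hMnoT v h.2, Or.inr h⟩
        rw [this, Finset.card_erase_of_mem hma.1, hMcard]
        simp
      · rw [h3]; exact hadm3

end AlmostSemicomplete
end

section
/- Let G be a digraph, S and T disjoint vertex sets, and suppose G has a gapless S–T separation chain of order k. Let (X,Y) be a minimum S–T separation of G. Then G has a gapless S–T chain of order at most k of the form C₁ + (X,Y) + C₂, where C₁ is a gapless S–(Y∖X) chain and C₂ is a gapless (X∖Y)–T chain (here + denotes concatenation of separation chains). -/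
namespace AlmostSemicomplete

variable {V : Type} [Fintype V] [DecidableEq V]

private lemma card_le_chainOrder {C : List (Finset V × Finset V)} {p : Finset V × Finset V}
    (hp : p ∈ C) : (p.1 ∩ p.2).card ≤ chainOrder C := by
  induction C with
  | nil => simp at hp
  | cons q C ih =>
    simp only [chainOrder, List.map_cons, List.foldr_cons] at *
    rcases List.mem_cons.mp hp with h | h
    · subst h; exact le_max_left _ _
    · exact le_trans (ih h) (le_max_right _ _)

private lemma submod (A B X Y : Finset V) :
    ((A ∩ X) ∩ (B ∪ Y)).card + ((A ∪ X) ∩ (B ∩ Y)).card ≤ (A ∩ B).card + (X ∩ Y).card := by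
  have h1 : ((A ∩ X) ∩ (B ∪ Y)) ∪ ((A ∪ X) ∩ (B ∩ Y)) ⊆ (A ∩ B) ∪ (X ∩ Y) := by
    intro v hv; simp only [Finset.mem_union, Finset.mem_inter] at *; tauto
  have h2 : ((A ∩ X) ∩ (B ∪ Y)) ∩ ((A ∪ X) ∩ (B ∩ Y)) ⊆ (A ∩ B) ∩ (X ∩ Y) := by
    intro v hv; simp only [Finset.mem_union, Finset.mem_inter] at *; tauto
  calc ((A ∩ X) ∩ (B ∪ Y)).card + ((A ∪ X) ∩ (B ∩ Y)).card
      = (((A ∩ X) ∩ (B ∪ Y)) ∪ ((A ∪ X) ∩ (B ∩ Y))).card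
        + (((A ∩ X) ∩ (B ∪ Y)) ∩ ((A ∪ X) ∩ (B ∩ Y))).card :=
        (Finset.card_union_add_card_inter _ _).symm
    _ ≤ ((A ∩ B) ∪ (X ∩ Y)).card + ((A ∩ B) ∩ (X ∩ Y)).card :=
        Nat.add_le_add (Finset.card_le_card h1) (Finset.card_le_card h2)
    _ = (A ∩ B).card + (X ∩ Y).card := Finset.card_union_add_card_inter _ _

private lemma corner1_sep {E : V → V → Prop} {A B X Y : Finset V}
    (hAB : IsSep E A B) (hXY : IsSep E X Y) : IsSep E (A ∩ X) (B ∪ Y) := by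
  obtain ⟨hu1, he1⟩ := hAB
  obtain ⟨hu2, he2⟩ := hXY
  constructor
  · apply Finset.eq_univ_iff_forall.mpr
    intro v
    have h1 : v ∈ A ∪ B := hu1 ▸ Finset.mem_univ v
    have h2 : v ∈ X ∪ Y := hu2 ▸ Finset.mem_univ v
    simp only [Finset.mem_union, Finset.mem_inter] at *
    tauto
  · intro a ha hna b _ hnb
    have haA : a ∈ A := (Finset.mem_inter.mp ha).1
    have haX : a ∈ X := (Finset.mem_inter.mp ha).2
    have hnaB : a ∉ B := fun h => hna (Finset.mem_union_left _ h)
    have hnaY : a ∉ Y := fun h => hna (Finset.mem_union_right _ h)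
    by_cases hbA : b ∈ A
    · have hbX : b ∉ X := fun h => hnb (Finset.mem_inter.mpr ⟨hbA, h⟩)
      have hbY : b ∈ Y := by
        rcases Finset.mem_union.mp (hu2 ▸ Finset.mem_univ b) with h | h
        · exact absurd h hbX
        · exact h
      exact he2 a haX hnaY b hbY hbX
    · have hbB : b ∈ B := by
        rcases Finset.mem_union.mp (hu1 ▸ Finset.mem_univ b) with h | h
        · exact absurd h hbA
        · exact h
      exact he1 a haA hnaB b hbB hbA

private lemma corner2_sep {E : V → V → Prop} {A B X Y : Finset V}
    (hAB : IsSep E A B) (hXY : IsSep E X Y) : IsSep E (A ∪ X) (B ∩ Y) := by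
  obtain ⟨hu1, he1⟩ := hAB
  obtain ⟨hu2, he2⟩ := hXY
  constructor
  · apply Finset.eq_univ_iff_forall.mpr
    intro v
    have h1 : v ∈ A ∪ B := hu1 ▸ Finset.mem_univ v
    have h2 : v ∈ X ∪ Y := hu2 ▸ Finset.mem_univ v
    simp only [Finset.mem_union, Finset.mem_inter] at *
    tauto
  · intro a _ hna b hb hnb
    have hbB : b ∈ B := (Finset.mem_inter.mp hb).1
    have hbY : b ∈ Y := (Finset.mem_inter.mp hb).2
    have hnbA : b ∉ A := fun h => hnb (Finset.mem_union_left _ h)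
    have hnbX : b ∉ X := fun h => hnb (Finset.mem_union_right _ h)
    by_cases haB : a ∈ B
    · have haY : a ∉ Y := fun h => hna (Finset.mem_inter.mpr ⟨haB, h⟩)
      have haX : a ∈ X := by
        rcases Finset.mem_union.mp (hu2 ▸ Finset.mem_univ a) with h | h
        · exact h
        · exact absurd h haY
      exact he2 a haX haY b hbY hnbX
    · have haA : a ∈ A := by
        rcases Finset.mem_union.mp (hu1 ▸ Finset.mem_univ a) with h | h
        · exact h
        · exact absurd h haB
      exact he1 a haA haB b hbB hnbA

private lemma sdiff_inter_subset (a b X : Finset V) : (b ∩ X) \ (a ∩ X) ⊆ b \ a := by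
  intro v hv; simp only [Finset.mem_sdiff, Finset.mem_inter, not_and] at *; tauto

private lemma sdiff_union_subset (a b Y : Finset V) : (a ∪ Y) \ (b ∪ Y) ⊆ a \ b := by
  intro v hv; simp only [Finset.mem_sdiff, Finset.mem_union, not_or] at *; tauto

/-- divide-and-conquer recurrence: a gapless `S`–`T` chain of order `k` can be split
through any minimum `S`–`T` separation `(X,Y)`. -/
theorem divide_through_min_separation (E : V → V → Prop) (hirr : Irreflexive E)
    (S T : Finset V) (hST : Disjoint S T) (k : ℕ)
    (C : List (Finset V × Finset V))
    (hC : IsSTChain E S T C ∧ Gapless C ∧ chainOrder C = k)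
    (X Y : Finset V) (hmin : IsMinSTSep E S T X Y) :
    ∃ C₁ C₂ : List (Finset V × Finset V),
      IsSTChain E S (Y \ X) C₁ ∧ Gapless C₁ ∧
      IsSTChain E (X \ Y) T C₂ ∧ Gapless C₂ ∧
      IsSTChain E S T (C₁ ++ (X, Y) :: C₂) ∧ Gapless (C₁ ++ (X, Y) :: C₂) ∧
      orderLE (C₁ ++ (X, Y) :: C₂) k := by
  obtain ⟨⟨⟨hsep, hchain⟩, hhead, hlast⟩, hgap, hord⟩ := hC
  obtain ⟨hXYst, hminord⟩ := hmin
  have hXYsep' : IsSep E X Y := hXYst.1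
  have hXYu : X ∪ Y = Finset.univ := hXYsep'.1
  have hSY : S ∩ Y = ∅ := hXYst.2.1
  have hTX : T ∩ X = ∅ := hXYst.2.2
  -- extract head and last elements
  obtain ⟨p₀, hp₀, hp₀2⟩ : ∃ p, C.head? = some p ∧ p.2 = Finset.univ \ S := by
    cases h : C.head? with
    | none => rw [h] at hhead; simp at hhead
    | some p =>
      rw [h] at hhead
      simp only [Option.map_some, Option.some.injEq] at hhead
      exact ⟨p, rfl, hhead⟩
  obtain ⟨q₀, hq₀, hq₀1⟩ : ∃ q, C.getLast? = some q ∧ q.1 = Finset.univ \ T := by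
    cases h : C.getLast? with
    | none => rw [h] at hlast; simp at hlast
    | some q =>
      rw [h] at hlast
      simp only [Option.map_some, Option.some.injEq] at hlast
      exact ⟨q, rfl, hlast⟩
  obtain ⟨Ct, rfl⟩ : ∃ l, C = p₀ :: l := by
    cases C with
    | nil => simp at hp₀
    | cons a l =>
      simp only [List.head?_cons, Option.some.injEq] at hp₀
      exact ⟨l, by rw [hp₀]⟩
  -- pairwise monotonicity
  have hpw : List.Pairwise (fun p q : Finset V × Finset V => p.1 ⊆ q.1 ∧ q.2 ⊆ p.2)
      (p₀ :: Ct) := by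
    letI : IsTrans (Finset V × Finset V) (fun p q => p.1 ⊆ q.1 ∧ q.2 ⊆ p.2) :=
      ⟨fun _ _ _ hab hbc => ⟨hab.1.trans hbc.1, hbc.2.trans hab.2⟩⟩
    exact List.isChain_iff_pairwise.mp hchain
  have hmemB : ∀ p ∈ p₀ :: Ct, p.2 ⊆ Finset.univ \ S := by
    intro p hp
    rcases List.mem_cons.mp hp with h | h
    · subst h; rw [hp₀2]
    · have := (List.pairwise_cons.mp hpw).1 p h
      rw [← hp₀2]; exact this.2
  have hmemA : ∀ p ∈ p₀ :: Ct, p.1 ⊆ Finset.univ \ T := by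
    intro p hp
    have hq₀mem : q₀ ∈ (p₀ :: Ct).getLast? := Option.mem_def.mpr hq₀
    have hCeq : (p₀ :: Ct).dropLast ++ [q₀] = p₀ :: Ct :=
      List.dropLast_append_getLast? q₀ hq₀mem
    rw [← hCeq] at hpw hp
    rcases List.mem_append.mp hp with h | h
    · have := (List.pairwise_append.mp hpw).2.2 p h q₀ (List.mem_singleton_self q₀)
      rw [← hq₀1]; exact this.1
    · rw [List.mem_singleton.mp h, hq₀1]
  have hSTsep : ∀ p ∈ p₀ :: Ct, IsSTSep E S T p.1 p.2 := by
    intro p hp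
    refine ⟨hsep p hp, ?_, ?_⟩
    · apply Finset.eq_empty_iff_forall_notMem.mpr
      intro v hv
      have hv' := Finset.mem_inter.mp hv
      exact (Finset.mem_sdiff.mp (hmemB p hp hv'.2)).2 hv'.1
    · apply Finset.eq_empty_iff_forall_notMem.mpr
      intro v hv
      have hv' := Finset.mem_inter.mp hv
      exact (Finset.mem_sdiff.mp (hmemA p hp hv'.2)).2 hv'.1
  -- basic facts about X, Y
  have hXcov : ∀ v : V, v ∈ X ∨ v ∈ Y := fun v =>
    Finset.mem_union.mp (hXYu ▸ Finset.mem_univ v)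
  have hSY' : ∀ v ∈ Y, v ∉ S := fun v hv hs =>
    Finset.eq_empty_iff_forall_notMem.mp hSY v (Finset.mem_inter.mpr ⟨hs, hv⟩)
  have hTX' : ∀ v ∈ X, v ∉ T := fun v hv ht =>
    Finset.eq_empty_iff_forall_notMem.mp hTX v (Finset.mem_inter.mpr ⟨ht, hv⟩)
  have hY_sub : Y ⊆ Finset.univ \ S := fun v hv =>
    Finset.mem_sdiff.mpr ⟨Finset.mem_univ v, hSY' v hv⟩
  have hX_sub : X ⊆ Finset.univ \ T := fun v hv =>
    Finset.mem_sdiff.mpr ⟨Finset.mem_univ v, hTX' v hv⟩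
  have hYXeq : Finset.univ \ (Y \ X) = X := by
    ext v
    simp only [Finset.mem_sdiff, Finset.mem_univ, true_and, not_and, not_not]
    have := hXcov v
    tauto
  have hXYeq2 : Finset.univ \ (X \ Y) = Y := by
    ext v
    simp only [Finset.mem_sdiff, Finset.mem_univ, true_and, not_and, not_not]
    have := hXcov v
    tauto
  have e1 : p₀.2 ∪ Y = Finset.univ \ S := by
    rw [hp₀2]; exact Finset.union_eq_left.mpr hY_sub
  have e2 : q₀.1 ∩ X = X := by
    rw [hq₀1]; exact Finset.inter_eq_right.mpr hX_sub
  have e3 : p₀.2 ∩ Y = Y := by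
    rw [hp₀2]; exact Finset.inter_eq_right.mpr hY_sub
  have e4 : q₀.1 ∪ X = Finset.univ \ T := by
    rw [hq₀1]; exact Finset.union_eq_left.mpr hX_sub
  -- monotonicity / gaplessness transfer
  have hmono1 : ∀ a b : Finset V × Finset V, (a.1 ⊆ b.1 ∧ b.2 ⊆ a.2) →
      (a.1 ∩ X ⊆ b.1 ∩ X ∧ b.2 ∪ Y ⊆ a.2 ∪ Y) := fun a b h =>
    ⟨Finset.inter_subset_inter h.1 (Finset.Subset.refl X),
     Finset.union_subset_union h.2 (Finset.Subset.refl Y)⟩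
  have hmono2 : ∀ a b : Finset V × Finset V, (a.1 ⊆ b.1 ∧ b.2 ⊆ a.2) →
      (a.1 ∪ X ⊆ b.1 ∪ X ∧ b.2 ∩ Y ⊆ a.2 ∩ Y) := fun a b h =>
    ⟨Finset.union_subset_union h.1 (Finset.Subset.refl X),
     Finset.inter_subset_inter h.2 (Finset.Subset.refl Y)⟩
  have hgap1 : ∀ a b : Finset V × Finset V,
      ((b.1 \ a.1).card ≤ 1 ∨ (a.2 \ b.2).card ≤ 1) →
      (((b.1 ∩ X) \ (a.1 ∩ X)).card ≤ 1 ∨ ((a.2 ∪ Y) \ (b.2 ∪ Y)).card ≤ 1) := by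
    intro a b h
    rcases h with h | h
    · exact Or.inl (le_trans (Finset.card_le_card (sdiff_inter_subset _ _ _)) h)
    · exact Or.inr (le_trans (Finset.card_le_card (sdiff_union_subset _ _ _)) h)
  have hgap2 : ∀ a b : Finset V × Finset V,
      ((b.1 \ a.1).card ≤ 1 ∨ (a.2 \ b.2).card ≤ 1) →
      (((b.1 ∪ X) \ (a.1 ∪ X)).card ≤ 1 ∨ ((a.2 ∩ Y) \ (b.2 ∩ Y)).card ≤ 1) := by
    intro a b h
    rcases h with h | h
    · exact Or.inl (le_trans (Finset.card_le_card (sdiff_union_subset _ _ _)) h)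
    · exact Or.inr (le_trans (Finset.card_le_card (sdiff_inter_subset _ _ _)) h)
  -- order bounds
  have hord1 : ∀ p ∈ p₀ :: Ct, ((p.1 ∩ X) ∩ (p.2 ∪ Y)).card ≤ k := by
    intro p hp
    obtain ⟨hps, hpS, hpT⟩ := hSTsep p hp
    have hc2 : IsSTSep E S T (p.1 ∪ X) (p.2 ∩ Y) := by
      refine ⟨corner2_sep hps hXYsep', ?_, ?_⟩
      · have hsub : S ∩ (p.2 ∩ Y) ⊆ S ∩ p.2 :=
          Finset.inter_subset_inter (Finset.Subset.refl S) Finset.inter_subset_left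
        rw [hpS] at hsub
        exact Finset.subset_empty.mp hsub
      · rw [Finset.inter_union_distrib_left, hpT, hTX, Finset.empty_union]
    have hmin2 := hminord _ _ hc2
    have hsub := submod p.1 p.2 X Y
    have hk := card_le_chainOrder hp
    rw [hord] at hk
    omega
  have hord2 : ∀ p ∈ p₀ :: Ct, ((p.1 ∪ X) ∩ (p.2 ∩ Y)).card ≤ k := by
    intro p hp
    obtain ⟨hps, hpS, hpT⟩ := hSTsep p hp
    have hc1 : IsSTSep E S T (p.1 ∩ X) (p.2 ∪ Y) := by
      refine ⟨corner1_sep hps hXYsep', ?_, ?_⟩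
      · rw [Finset.inter_union_distrib_left, hpS, hSY, Finset.empty_union]
      · have hsub : T ∩ (p.1 ∩ X) ⊆ T ∩ p.1 :=
          Finset.inter_subset_inter (Finset.Subset.refl T) Finset.inter_subset_left
        rw [hpT] at hsub
        exact Finset.subset_empty.mp hsub
    have hmin1 := hminord _ _ hc1
    have hsub := submod p.1 p.2 X Y
    have hk := card_le_chainOrder hp
    rw [hord] at hk
    omega
  have hordXY : (X ∩ Y).card ≤ k := by
    have h1 := hminord p₀.1 p₀.2 (hSTsep p₀ List.mem_cons_self)
    have hk := card_le_chainOrder (C := p₀ :: Ct) (p := p₀) List.mem_cons_self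
    rw [hord] at hk
    omega
  -- endpoint computations for mapped chains
  have hlast1 : ((p₀ :: Ct).map fun p => (p.1 ∩ X, p.2 ∪ Y)).getLast?
      = some (q₀.1 ∩ X, q₀.2 ∪ Y) := by
    rw [List.getLast?_map, hq₀]; rfl
  have hlast2 : ((p₀ :: Ct).map fun p => (p.1 ∪ X, p.2 ∩ Y)).getLast?
      = some (q₀.1 ∪ X, q₀.2 ∩ Y) := by
    rw [List.getLast?_map, hq₀]; rfl
  refine ⟨(p₀ :: Ct).map fun p => (p.1 ∩ X, p.2 ∪ Y),
          (p₀ :: Ct).map fun p => (p.1 ∪ X, p.2 ∩ Y), ?_, ?_, ?_, ?_, ?_, ?_, ?_⟩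
  -- IsSTChain E S (Y \ X) C₁
  · refine ⟨⟨?_, ?_⟩, ?_, ?_⟩
    · intro p hp
      obtain ⟨q, hq, rfl⟩ := List.mem_map.mp hp
      exact corner1_sep (hsep q hq) hXYsep'
    · exact (List.isChain_map _).mpr (hchain.imp fun {a b} => hmono1 a b)
    · simp only [List.map_cons, List.head?_cons, Option.map_some]
      exact congrArg some e1
    · rw [hlast1]
      simp only [Option.map_some]
      exact congrArg some (e2.trans hYXeq.symm)
  -- Gapless C₁
  · exact (List.isChain_map _).mpr (hgap.imp fun {a b} => hgap1 a b)
  -- IsSTChain E (X \ Y) T C₂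
  · refine ⟨⟨?_, ?_⟩, ?_, ?_⟩
    · intro p hp
      obtain ⟨q, hq, rfl⟩ := List.mem_map.mp hp
      exact corner2_sep (hsep q hq) hXYsep'
    · exact (List.isChain_map _).mpr (hchain.imp fun {a b} => hmono2 a b)
    · simp only [List.map_cons, List.head?_cons, Option.map_some]
      exact congrArg some (e3.trans hXYeq2.symm)
    · rw [hlast2]
      simp only [Option.map_some]
      exact congrArg some e4
  -- Gapless C₂
  · exact (List.isChain_map _).mpr (hgap.imp fun {a b} => hgap2 a b)
  -- IsSTChain E S T of the concatenation
  · refine ⟨⟨?_, ?_⟩, ?_, ?_⟩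
    · intro p hp
      rcases List.mem_append.mp hp with h | h
      · obtain ⟨q, hq, rfl⟩ := List.mem_map.mp h
        exact corner1_sep (hsep q hq) hXYsep'
      · rcases List.mem_cons.mp h with h | h
        · subst h; exact hXYsep'
        · obtain ⟨q, hq, rfl⟩ := List.mem_map.mp h
          exact corner2_sep (hsep q hq) hXYsep'
    · apply List.isChain_append.mpr
      refine ⟨(List.isChain_map _).mpr (hchain.imp fun {a b} => hmono1 a b), ?_, ?_⟩
      · apply List.isChain_cons.mpr
        refine ⟨?_, (List.isChain_map _).mpr (hchain.imp fun {a b} => hmono2 a b)⟩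
        intro y hy
        simp only [List.map_cons, List.head?_cons, Option.mem_def, Option.some.injEq] at hy
        subst hy
        exact ⟨Finset.subset_union_right, Finset.inter_subset_right⟩
      · intro x hx y hy
        rw [hlast1] at hx
        simp only [Option.mem_def, Option.some.injEq] at hx
        simp only [List.head?_cons, Option.mem_def, Option.some.injEq] at hy
        subst hx; subst hy
        exact ⟨Finset.inter_subset_right, Finset.subset_union_right⟩
    · rw [List.map_cons, List.cons_append, List.head?_cons]
      simp only [Option.map_some]
      exact congrArg some e1
    · rw [List.getLast?_append_of_ne_nil _ (List.cons_ne_nil _ _)]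
      rw [List.map_cons, List.getLast?_cons_cons]
      have h2 : ((p₀.1 ∪ X, p₀.2 ∩ Y) :: List.map (fun p => (p.1 ∪ X, p.2 ∩ Y)) Ct).getLast?
          = some (q₀.1 ∪ X, q₀.2 ∩ Y) := hlast2
      rw [h2]
      simp only [Option.map_some]
      exact congrArg some e4
  -- Gapless of the concatenation
  · apply List.isChain_append.mpr
    refine ⟨(List.isChain_map _).mpr (hgap.imp fun {a b} => hgap1 a b), ?_, ?_⟩
    · apply List.isChain_cons.mpr
      refine ⟨?_, (List.isChain_map _).mpr (hgap.imp fun {a b} => hgap2 a b)⟩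
      intro y hy
      simp only [List.map_cons, List.head?_cons, Option.mem_def, Option.some.injEq] at hy
      subst hy
      refine Or.inr ?_
      show (Y \ (p₀.2 ∩ Y)).card ≤ 1
      rw [e3]; simp
    · intro x hx y hy
      rw [hlast1] at hx
      simp only [Option.mem_def, Option.some.injEq] at hx
      simp only [List.head?_cons, Option.mem_def, Option.some.injEq] at hy
      subst hx; subst hy
      refine Or.inl ?_
      show (X \ (q₀.1 ∩ X)).card ≤ 1
      rw [e2]; simp
  -- order bound
  · intro p hp
    rcases List.mem_append.mp hp with h | h
    · obtain ⟨q, hq, rfl⟩ := List.mem_map.mp h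
      exact hord1 q hq
    · rcases List.mem_cons.mp h with h | h
      · subst h; exact hordXY
      · obtain ⟨q, hq, rfl⟩ := List.mem_map.mp h
        exact hord2 q hq

end AlmostSemicomplete
end

section
/- Let G be a digraph and S, T disjoint vertex sets. If G has a gapless S–T separation chain of order at most k, then G has a gapless S–T separation chain of order at most k that is both tight and nice. -/
namespace AlmostSemicomplete

variable {V : Type} [Fintype V] [DecidableEq V]

section Aux

variable {E : V → V → Prop} [DecidableRel E]

private lemma chain'_and {α : Type*} {R S : α → α → Prop} {l : List α}
    (hR : List.Chain' R l) (hS : List.Chain' S l) :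
    List.Chain' (fun a b => R a b ∧ S a b) l := by
  rw [List.Chain', List.isChain_iff_getElem] at *
  exact fun i h => ⟨hR i h, hS i h⟩

private lemma mem_union_univ {A B : Finset V} (hU : A ∪ B = Finset.univ) {x : V}
    (hx : x ∉ B) : x ∈ A := by
  have : x ∈ A ∪ B := hU ▸ Finset.mem_univ x
  rcases Finset.mem_union.1 this with h | h
  · exact h
  · exact absurd h hx

private lemma sep_shrinkB {A' B B' : Finset V} (hU : A' ∪ B = Finset.univ)
    (hsep' : IsSep E A' B') (hBB : B' ⊆ B) {v : V} (hvB : v ∈ B) (hvB' : v ∉ B') :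
    IsSep E A' (B.erase v) := by
  have hvA' : v ∈ A' := mem_union_univ hsep'.1 hvB'
  constructor
  · apply Finset.eq_univ_of_forall
    intro x
    rcases Finset.mem_union.1 (hU ▸ Finset.mem_univ x) with h | h
    · exact Finset.mem_union_left _ h
    · by_cases hxv : x = v
      · exact Finset.mem_union_left _ (hxv ▸ hvA')
      · exact Finset.mem_union_right _ (Finset.mem_erase.2 ⟨hxv, h⟩)
  · intro a ha haB b hb hbA'
    have hbB : b ∈ B := Finset.mem_of_mem_erase hb
    have hbB' : b ∈ B' :=
      mem_union_univ (by rw [Finset.union_comm]; exact hsep'.1) hbA'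
    have haB' : a ∉ B' := by
      intro haB'
      exact haB (Finset.mem_erase.2 ⟨fun h => hvB' (h ▸ haB'), hBB haB'⟩)
    exact hsep'.2 a ha haB' b hbB' hbA'

private lemma sep_growA {A B : Finset V} (hsep : IsSep E A B) {u : V} (hu : u ∈ B) :
    IsSep E (insert u A) B := by
  constructor
  · apply Finset.eq_univ_of_forall
    intro x
    rcases Finset.mem_union.1 (hsep.1 ▸ Finset.mem_univ x) with h | h
    · exact Finset.mem_union_left _ (Finset.mem_insert_of_mem h)
    · exact Finset.mem_union_right _ h
  · intro a ha haB b hb hbA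
    rcases Finset.mem_insert.1 ha with rfl | haA
    · exact absurd hu haB
    · exact hsep.2 a haA haB b hb (fun h => hbA (Finset.mem_insert_of_mem h))

/-- The relation for a nice monotone chain. -/
private def GoodRel (p q : Finset V × Finset V) : Prop :=
  (p.1 ⊆ q.1 ∧ q.2 ⊆ p.2) ∧ (q.1 \ p.1).card ≤ 1 ∧ (p.2 \ q.2).card ≤ 1

private def GoodChain (E : V → V → Prop) (k : ℕ) (M : List (Finset V × Finset V)) : Prop :=
  (∀ p ∈ M, IsSep E p.1 p.2 ∧ (p.1 ∩ p.2).card ≤ k) ∧ List.Chain' GoodRel M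

private lemma ins_direct {k : ℕ} {A B A' B' : Finset V}
    (h1 : IsSep E A B) (h2 : IsSep E A' B') (hAA : A ⊆ A') (hBB : B' ⊆ B)
    (ha : (A' \ A).card ≤ 1) (hb : (B \ B').card ≤ 1)
    (o1 : (A ∩ B).card ≤ k) (o2 : (A' ∩ B').card ≤ k) :
    ∃ M : List (Finset V × Finset V), M.head? = some (A, B) ∧
      M.getLast? = some (A', B') ∧ GoodChain E k M := by
  refine ⟨[(A, B), (A', B')], rfl, rfl, ?_, List.isChain_pair.2 ⟨⟨hAA, hBB⟩, ha, hb⟩⟩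
  intro p hp
  rcases List.mem_cons.1 hp with rfl | hp
  · exact ⟨h1, o1⟩
  · rcases List.mem_cons.1 hp with rfl | hp
    · exact ⟨h2, o2⟩
    · simp at hp

private lemma ins1 {k : ℕ} {A' B' : Finset V} (hsep' : IsSep E A' B')
    (hord' : (A' ∩ B').card ≤ k) :
    ∀ (n : ℕ) (A B : Finset V), (B \ B').card = n → IsSep E A B → A ⊆ A' → B' ⊆ B →
      (A' \ A).card ≤ 1 → (A ∩ B).card ≤ k →
      ∃ M : List (Finset V × Finset V), M.head? = some (A, B) ∧
        M.getLast? = some (A', B') ∧ GoodChain E k M := by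
  intro n
  induction n with
  | zero =>
    intro A B hn hsep hAA hBB hA1 hord
    exact ins_direct hsep hsep' hAA hBB hA1 (hn ▸ Nat.zero_le 1) hord hord'
  | succ n ih =>
    intro A B hn hsep hAA hBB hA1 hord
    rcases Nat.eq_zero_or_pos n with rfl | hn1
    · exact ins_direct hsep hsep' hAA hBB hA1 (hn ▸ le_refl 1) hord hord'
    obtain ⟨v, hv⟩ := Finset.card_pos.1 (by omega : 0 < (B \ B').card)
    have hvB : v ∈ B := (Finset.mem_sdiff.1 hv).1
    have hvB' : v ∉ B' := (Finset.mem_sdiff.1 hv).2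
    have hvA' : v ∈ A' := mem_union_univ hsep'.1 hvB'
    have hU : A' ∪ B = Finset.univ := by
      apply Finset.eq_univ_of_forall
      intro x
      rcases Finset.mem_union.1 (hsep.1 ▸ Finset.mem_univ x) with h | h
      · exact Finset.mem_union_left _ (hAA h)
      · exact Finset.mem_union_right _ h
    set B₁ := B.erase v with hB₁
    have hsep₁ : IsSep E A' B₁ := sep_shrinkB hU hsep' hBB hvB hvB'
    have hBB₁ : B' ⊆ B₁ := Finset.subset_erase.2 ⟨hBB, hvB'⟩
    have hcard₁ : (B₁ \ B').card = n := by
      have : B₁ \ B' = (B \ B').erase v := by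
        ext x
        simp only [hB₁, Finset.mem_sdiff, Finset.mem_erase]
        tauto
      rw [this, Finset.card_erase_of_mem hv, hn]; omega
    have hord₁ : (A' ∩ B₁).card ≤ k := by
      have hsub : A' ∩ B₁ ⊆ ((A ∩ B) ∪ (A' \ A)).erase v := by
        intro x hx
        obtain ⟨hxA', hxB₁⟩ := Finset.mem_inter.1 hx
        refine Finset.mem_erase.2 ⟨(Finset.mem_erase.1 hxB₁).1, ?_⟩
        by_cases hxA : x ∈ A
        · exact Finset.mem_union_left _ (Finset.mem_inter.2 ⟨hxA, Finset.mem_of_mem_erase hxB₁⟩)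
        · exact Finset.mem_union_right _ (Finset.mem_sdiff.2 ⟨hxA', hxA⟩)
      have hvmem : v ∈ (A ∩ B) ∪ (A' \ A) := by
        by_cases hvA : v ∈ A
        · exact Finset.mem_union_left _ (Finset.mem_inter.2 ⟨hvA, hvB⟩)
        · exact Finset.mem_union_right _ (Finset.mem_sdiff.2 ⟨hvA', hvA⟩)
      calc (A' ∩ B₁).card ≤ (((A ∩ B) ∪ (A' \ A)).erase v).card := Finset.card_le_card hsub
        _ = ((A ∩ B) ∪ (A' \ A)).card - 1 := Finset.card_erase_of_mem hvmem
        _ ≤ ((A ∩ B).card + (A' \ A).card) - 1 := by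
            exact Nat.sub_le_sub_right (Finset.card_union_le _ _) 1
        _ ≤ k := by omega
    obtain ⟨M', hh', hl', hgood'⟩ := ih A' B₁ hcard₁ hsep₁ (le_refl _) hBB₁
      (by simp) hord₁
    cases M' with
    | nil => simp at hh'
    | cons m0 M₁ =>
      have hm0 : m0 = (A', B₁) := by simpa using hh'
      refine ⟨(A, B) :: m0 :: M₁, rfl, by rw [List.getLast?_cons_cons]; exact hl', ?_, ?_⟩
      · intro p hp
        rcases List.mem_cons.1 hp with rfl | hp
        · exact ⟨hsep, hord⟩
        · exact hgood'.1 p hp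
      · rw [List.Chain', List.isChain_cons_cons]
        refine ⟨?_, hgood'.2⟩
        rw [hm0]
        refine ⟨⟨hAA, Finset.erase_subset _ _⟩, hA1, ?_⟩
        have : B \ B₁ = {v} := by
          ext x
          simp only [hB₁, Finset.mem_sdiff, Finset.mem_erase, Finset.mem_singleton]
          constructor
          · rintro ⟨hxB, hx⟩
            by_contra hxv
            exact hx ⟨hxv, hxB⟩
          · rintro rfl
            exact ⟨hvB, fun h => h.1 rfl⟩
        rw [this, Finset.card_singleton]

private lemma ins2 {k : ℕ} {A' B' : Finset V} (hsep' : IsSep E A' B')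
    (hord' : (A' ∩ B').card ≤ k) :
    ∀ (n : ℕ) (A B : Finset V), (A' \ A).card = n → IsSep E A B → A ⊆ A' → B' ⊆ B →
      (B \ B').card ≤ 1 → (A ∩ B).card ≤ k →
      ∃ M : List (Finset V × Finset V), M.head? = some (A, B) ∧
        M.getLast? = some (A', B') ∧ GoodChain E k M := by
  intro n
  induction n with
  | zero =>
    intro A B hn hsep hAA hBB hB1 hord
    exact ins_direct hsep hsep' hAA hBB (hn ▸ Nat.zero_le 1) hB1 hord hord'
  | succ n ih =>
    intro A B hn hsep hAA hBB hB1 hord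
    rcases Nat.eq_zero_or_pos n with rfl | hn1
    · exact ins_direct hsep hsep' hAA hBB (hn ▸ le_refl 1) hB1 hord hord'
    obtain ⟨u, hu⟩ := Finset.card_pos.1 (by omega : 0 < (A' \ A).card)
    have huA' : u ∈ A' := (Finset.mem_sdiff.1 hu).1
    have huA : u ∉ A := (Finset.mem_sdiff.1 hu).2
    have huB : u ∈ B := by
      rcases Finset.mem_union.1 (hsep.1 ▸ Finset.mem_univ u) with h | h
      · exact absurd h huA
      · exact h
    set A₁ := insert u A with hA₁
    have hsep₁ : IsSep E A₁ B := sep_growA hsep huB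
    have hA₁A' : A₁ ⊆ A' := Finset.insert_subset huA' hAA
    have hcard₁ : (A' \ A₁).card = n := by
      have : A' \ A₁ = (A' \ A).erase u := by
        ext x
        simp only [hA₁, Finset.mem_sdiff, Finset.mem_erase, Finset.mem_insert]
        tauto
      rw [this, Finset.card_erase_of_mem hu, hn]; omega
    have hord₁ : (A₁ ∩ B).card ≤ k := by
      obtain ⟨w, hw⟩ := Finset.card_pos.1 (by omega : 0 < (A' \ A₁).card)
      have hwA' : w ∈ A' := (Finset.mem_sdiff.1 hw).1
      have hwA₁ : w ∉ A₁ := (Finset.mem_sdiff.1 hw).2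
      have hwB : w ∈ B := by
        rcases Finset.mem_union.1 (hsep.1 ▸ Finset.mem_univ w) with h | h
        · exact absurd h (fun hh => hwA₁ (hA₁ ▸ Finset.mem_insert_of_mem h))
        · exact h
      have hsub : A₁ ∩ B ⊆ ((A' ∩ B') ∪ (B \ B')).erase w := by
        intro x hx
        obtain ⟨hxA₁, hxB⟩ := Finset.mem_inter.1 hx
        refine Finset.mem_erase.2 ⟨fun h => hwA₁ (h ▸ hxA₁), ?_⟩
        by_cases hxB' : x ∈ B'
        · exact Finset.mem_union_left _ (Finset.mem_inter.2 ⟨hA₁A' hxA₁, hxB'⟩)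
        · exact Finset.mem_union_right _ (Finset.mem_sdiff.2 ⟨hxB, hxB'⟩)
      have hwmem : w ∈ (A' ∩ B') ∪ (B \ B') := by
        by_cases hwB' : w ∈ B'
        · exact Finset.mem_union_left _ (Finset.mem_inter.2 ⟨hwA', hwB'⟩)
        · exact Finset.mem_union_right _ (Finset.mem_sdiff.2 ⟨hwB, hwB'⟩)
      calc (A₁ ∩ B).card ≤ (((A' ∩ B') ∪ (B \ B')).erase w).card := Finset.card_le_card hsub
        _ = ((A' ∩ B') ∪ (B \ B')).card - 1 := Finset.card_erase_of_mem hwmem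
        _ ≤ ((A' ∩ B').card + (B \ B').card) - 1 := by
            exact Nat.sub_le_sub_right (Finset.card_union_le _ _) 1
        _ ≤ k := by omega
    obtain ⟨M', hh', hl', hgood'⟩ := ih A₁ B hcard₁ hsep₁ hA₁A' hBB hB1 hord₁
    cases M' with
    | nil => simp at hh'
    | cons m0 M₁ =>
      have hm0 : m0 = (A₁, B) := by simpa using hh'
      refine ⟨(A, B) :: m0 :: M₁, rfl, by rw [List.getLast?_cons_cons]; exact hl', ?_, ?_⟩
      · intro p hp
        rcases List.mem_cons.1 hp with rfl | hp
        · exact ⟨hsep, hord⟩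
        · exact hgood'.1 p hp
      · rw [List.Chain', List.isChain_cons_cons]
        refine ⟨?_, hgood'.2⟩
        rw [hm0]
        refine ⟨⟨Finset.subset_insert _ _, le_refl _⟩, ?_, by simp⟩
        have : A₁ \ A = {u} := by
          ext x
          simp only [hA₁, Finset.mem_sdiff, Finset.mem_insert, Finset.mem_singleton]
          constructor
          · rintro ⟨hx1 | hx1, hx2⟩
            · exact hx1
            · exact absurd hx1 hx2
          · rintro rfl
            exact ⟨Or.inl rfl, huA⟩
        rw [this, Finset.card_singleton]

private lemma insPair {k : ℕ} {A B A' B' : Finset V}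
    (h1 : IsSep E A B) (h2 : IsSep E A' B') (hAA : A ⊆ A') (hBB : B' ⊆ B)
    (hgap : (A' \ A).card ≤ 1 ∨ (B \ B').card ≤ 1)
    (o1 : (A ∩ B).card ≤ k) (o2 : (A' ∩ B').card ≤ k) :
    ∃ M : List (Finset V × Finset V), M.head? = some (A, B) ∧
      M.getLast? = some (A', B') ∧ GoodChain E k M := by
  rcases hgap with hgap | hgap
  · exact ins1 h2 o2 _ A B rfl h1 hAA hBB hgap o1
  · exact ins2 h2 o2 _ A B rfl h1 hAA hBB hgap o1

private lemma nicify {k : ℕ} :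
    ∀ C : List (Finset V × Finset V), C ≠ [] →
      (∀ p ∈ C, IsSep E p.1 p.2 ∧ (p.1 ∩ p.2).card ≤ k) →
      List.Chain' (fun p q => (p.1 ⊆ q.1 ∧ q.2 ⊆ p.2) ∧
        ((q.1 \ p.1).card ≤ 1 ∨ (p.2 \ q.2).card ≤ 1)) C →
      ∃ D : List (Finset V × Finset V), D.head? = C.head? ∧ D.getLast? = C.getLast? ∧
        GoodChain E k D := by
  intro C
  induction C with
  | nil => intro h; exact absurd rfl h
  | cons p rest ih =>
    cases rest with
    | nil =>
      intro _ hmem _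
      exact ⟨[p], rfl, rfl, hmem, List.isChain_singleton p⟩
    | cons q rest' =>
      intro _ hmem hch
      rw [List.Chain', List.isChain_cons_cons] at hch
      obtain ⟨D', hh', hl', hgood'⟩ := ih (List.cons_ne_nil _ _)
        (fun x hx => hmem x (List.mem_cons_of_mem _ hx)) hch.2
      have hp := hmem p List.mem_cons_self
      have hq := hmem q (List.mem_cons_of_mem _ List.mem_cons_self)
      obtain ⟨M, hMh, hMl, hMgood⟩ := insPair hp.1 hq.1 hch.1.1.1 hch.1.1.2 hch.1.2 hp.2 hq.2
      cases D' with
      | nil => simp at hh'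
      | cons d0 t =>
        have hd0 : d0 = q := by simpa using hh'
        subst hd0
        cases M with
        | nil => simp at hMh
        | cons m0 M₁ =>
          refine ⟨(m0 :: M₁) ++ t, ?_, ?_, ?_, ?_⟩
          · simpa using hMh
          · cases t with
            | nil =>
              rw [List.append_nil, List.getLast?_cons_cons, ← hl']
              simpa using hMl
            | cons t0 t' =>
              show ((m0 :: M₁) ++ (t0 :: t')).getLast? = (p :: d0 :: rest').getLast?
              rw [List.getLast?_append_cons, List.getLast?_cons_cons, ← hl',
                List.getLast?_cons_cons]
          · intro x hx
            rcases List.mem_append.1 hx with hx | hx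
            · exact hMgood.1 x hx
            · exact hgood'.1 x (List.mem_cons_of_mem _ hx)
          · rw [List.Chain', List.isChain_append]
            refine ⟨hMgood.2, List.IsChain.tail hgood'.2, ?_⟩
            intro x hx y hy
            rw [hMl] at hx
            simp only [Option.mem_def, Option.some.injEq] at hx
            subst hx
            exact (List.isChain_cons.1 hgood'.2).1 y hy

private lemma closedOut_mem_iff {S : Finset V} {b : V} :
    b ∈ closedOut E S ↔ ∃ s ∈ S, b = s ∨ E s b := by
  simp [closedOut, Finset.mem_biUnion, Finset.mem_insert, Finset.mem_filter]

private lemma closedIn_mem_iff {T : Finset V} {b : V} :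
    b ∈ closedIn E T ↔ ∃ t ∈ T, b = t ∨ E b t := by
  simp [closedIn, Finset.mem_biUnion, Finset.mem_insert, Finset.mem_filter]

end Aux


/-- If `G` has a gapless `S`–`T` chain of order at most `k` then it has a tight, nice,
and gapless `S`–`T` chain of order at most `k`. -/
theorem exists_tight_nice_gapless_chain (E : V → V → Prop) [DecidableRel E]
    (hirr : Irreflexive E) (S T : Finset V) (hST : Disjoint S T) (k : ℕ)
    (h : ∃ C : List (Finset V × Finset V), IsSTChain E S T C ∧ Gapless C ∧ orderLE C k) :
    ∃ C : List (Finset V × Finset V),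
      IsSTChain E S T C ∧ Gapless C ∧ orderLE C k ∧ Tight E S T C ∧ Nice C := by
  classical
  obtain ⟨C, ⟨⟨hmemsep, hmono⟩, hhead, hlast⟩, hgap, hord⟩ := h
  have hCne : C ≠ [] := by
    intro hC
    rw [hC] at hhead
    simp at hhead
  obtain ⟨c0, rest, rfl⟩ := List.exists_cons_of_ne_nil hCne
  have hc02 : c0.2 = Finset.univ \ S := by simpa using hhead
  set cl := (c0 :: rest).getLast (List.cons_ne_nil _ _) with hcldef
  have hclq : (c0 :: rest).getLast? = some cl := List.getLast?_eq_getLast _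
  have hcl1 : cl.1 = Finset.univ \ T := by
    rw [hclq] at hlast
    simpa using hlast
  have hc0mem : c0 ∈ c0 :: rest := List.mem_cons_self
  have hclmem : cl ∈ c0 :: rest := List.getLast_mem _
  have sep0 := hmemsep c0 hc0mem
  have sepl := hmemsep cl hclmem
  have hU0' : c0.2 ∪ c0.1 = Finset.univ := by rw [Finset.union_comm]; exact sep0.1
  have hUl' : cl.2 ∪ cl.1 = Finset.univ := by rw [Finset.union_comm]; exact sepl.1
  have hSsub : ∀ s ∈ S, s ∈ c0.1 := by
    intro s hs
    refine mem_union_univ sep0.1 ?_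
    rw [hc02]
    simp [hs]
  have hOutSub : closedOut E S ⊆ c0.1 := by
    intro b hb
    rcases closedOut_mem_iff.1 hb with ⟨s, hs, rfl | hE⟩
    · exact hSsub _ hs
    · by_contra hbA
      have hbB : b ∈ c0.2 := mem_union_univ hU0' hbA
      have hsB : s ∉ c0.2 := by rw [hc02]; simp [hs]
      exact sep0.2 s (hSsub s hs) hsB b hbB hbA hE
  have order0 : (closedOut E S ∩ (Finset.univ \ S)).card ≤ k := by
    have hsub : closedOut E S ∩ (Finset.univ \ S) ⊆ c0.1 ∩ c0.2 := by
      intro x hx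
      obtain ⟨hx1, hx2⟩ := Finset.mem_inter.1 hx
      exact Finset.mem_inter.2 ⟨hOutSub hx1, by rw [hc02]; exact hx2⟩
    exact le_trans (Finset.card_le_card hsub) (hord c0 hc0mem)
  have sepP0 : IsSep E (closedOut E S) (Finset.univ \ S) := by
    constructor
    · apply Finset.eq_univ_of_forall
      intro x
      by_cases hx : x ∈ S
      · exact Finset.mem_union_left _ (closedOut_mem_iff.2 ⟨x, hx, Or.inl rfl⟩)
      · exact Finset.mem_union_right _ (by simp [hx])
    · intro a ha haB b hb hbA hE
      have haS : a ∈ S := by simpa using haB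
      exact hbA (closedOut_mem_iff.2 ⟨a, haS, Or.inr hE⟩)
  have hTsub : ∀ t ∈ T, t ∈ cl.2 := by
    intro t ht
    refine mem_union_univ hUl' ?_
    rw [hcl1]
    simp [ht]
  have hInSub : closedIn E T ⊆ cl.2 := by
    intro b hb
    rcases closedIn_mem_iff.1 hb with ⟨t, ht, rfl | hE⟩
    · exact hTsub _ ht
    · by_contra hbB
      have hbA : b ∈ cl.1 := mem_union_univ sepl.1 hbB
      have htA : t ∉ cl.1 := by rw [hcl1]; simp [ht]
      exact sepl.2 b hbA hbB t (hTsub t ht) htA hE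
  have orderl : ((Finset.univ \ T) ∩ closedIn E T).card ≤ k := by
    have hsub : (Finset.univ \ T) ∩ closedIn E T ⊆ cl.1 ∩ cl.2 := by
      intro x hx
      obtain ⟨hx1, hx2⟩ := Finset.mem_inter.1 hx
      exact Finset.mem_inter.2 ⟨by rw [hcl1]; exact hx1, hInSub hx2⟩
    exact le_trans (Finset.card_le_card hsub) (hord cl hclmem)
  have sepPl : IsSep E (Finset.univ \ T) (closedIn E T) := by
    constructor
    · apply Finset.eq_univ_of_forall
      intro x
      by_cases hx : x ∈ T
      · exact Finset.mem_union_right _ (closedIn_mem_iff.2 ⟨x, hx, Or.inl rfl⟩)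
      · exact Finset.mem_union_left _ (by simp [hx])
    · intro a ha haB b hb hbA hE
      have hbT : b ∈ T := by simpa using hbA
      exact haB (closedIn_mem_iff.2 ⟨b, hbT, Or.inr hE⟩)
  set P0 : Finset V × Finset V := (closedOut E S, Finset.univ \ S) with hP0
  set Pl : Finset V × Finset V := (Finset.univ \ T, closedIn E T) with hPl
  set C' : List (Finset V × Finset V) := P0 :: ((c0 :: rest) ++ [Pl]) with hC'
  have hmem' : ∀ p ∈ C', IsSep E p.1 p.2 ∧ (p.1 ∩ p.2).card ≤ k := by
    intro p hp
    rcases List.mem_cons.1 hp with rfl | hp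
    · exact ⟨sepP0, order0⟩
    · rcases List.mem_append.1 hp with hp | hp
      · exact ⟨hmemsep p hp, hord p hp⟩
      · rcases List.mem_singleton.1 hp with rfl
        exact ⟨sepPl, orderl⟩
  have hcomb : List.Chain' (fun p q : Finset V × Finset V =>
      (p.1 ⊆ q.1 ∧ q.2 ⊆ p.2) ∧ ((q.1 \ p.1).card ≤ 1 ∨ (p.2 \ q.2).card ≤ 1))
      (c0 :: rest) := chain'_and hmono hgap
  have hchainApp : List.Chain' (fun p q : Finset V × Finset V =>
      (p.1 ⊆ q.1 ∧ q.2 ⊆ p.2) ∧ ((q.1 \ p.1).card ≤ 1 ∨ (p.2 \ q.2).card ≤ 1))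
      ((c0 :: rest) ++ [Pl]) := by
    rw [List.Chain', List.isChain_append]
    refine ⟨hcomb, List.isChain_singleton _, ?_⟩
    intro x hx y hy
    rw [hclq] at hx
    simp only [Option.mem_def, Option.some.injEq, List.head?_cons] at hx hy
    subst hx; subst hy
    refine ⟨⟨by rw [hcl1], hInSub⟩, Or.inl ?_⟩
    simp [hcl1, hPl]
  have hchain' : List.Chain' (fun p q : Finset V × Finset V =>
      (p.1 ⊆ q.1 ∧ q.2 ⊆ p.2) ∧ ((q.1 \ p.1).card ≤ 1 ∨ (p.2 \ q.2).card ≤ 1)) C' := by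
    rw [hC', List.Chain', List.isChain_cons]
    refine ⟨?_, hchainApp⟩
    intro y hy
    simp only [List.cons_append, List.head?_cons, Option.mem_def, Option.some.injEq] at hy
    subst hy
    refine ⟨⟨hOutSub, by rw [hc02]⟩, Or.inr ?_⟩
    simp [hc02, hP0]
  obtain ⟨D, hDh, hDl, hDgood⟩ := nicify C' (List.cons_ne_nil _ _) hmem' hchain'
  have hDhead : D.head? = some P0 := by rw [hDh, hC', List.head?_cons]
  have hDlast : D.getLast? = some Pl := by
    rw [hDl, show C' = (P0 :: c0 :: rest) ++ [Pl] from rfl]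
    exact List.getLast?_concat
  refine ⟨D, ⟨⟨fun p hp => (hDgood.1 p hp).1,
      List.IsChain.imp (fun a b hab => hab.1) hDgood.2⟩,
      by rw [hDhead, hP0]; rfl, by rw [hDlast, hPl]; rfl⟩,
    List.IsChain.imp (fun a b hab => Or.inl hab.2.1) hDgood.2,
    fun p hp => (hDgood.1 p hp).2,
    ⟨by rw [hDhead, hP0]; rfl, by rw [hDlast, hPl]; rfl⟩,
    List.IsChain.imp (fun a b hab => hab.2) hDgood.2⟩

end AlmostSemicomplete
end

section
/- Let G be a digraph and S, T disjoint vertex sets. Suppose G has a gapless S–T separation chain of order at most k and that |V(G) ∖ (S ∪ T)| ≥ k + 2. Then there exist a gapless S–T chain ((A_0,B_0),…,(A_r,B_r)) of order at most k and distinct vertices u ∈ V(G) ∖ (S ∪ N⁻[T]) and v ∈ V(G) ∖ (T ∪ N⁺[S]) such that: (1) ((A_1,B_1),…,(A_r,B_r)) is an (S ∪ {u})–T chain, (2) ((A_0,B_0),…,(A_{r−1},B_{r−1})) is an S–(T ∪ {v}) chain, and (3) ((A_1,B_1),…,(A_{r−1},B_{r−1})) is an (S ∪ {u})–(T ∪ {v})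 chain. -/
namespace AlmostSemicomplete

variable {V : Type} [Fintype V] [DecidableEq V]

section BranchingAux

private lemma cov1 {E : V → V → Prop} {A B : Finset V} (h : IsSep E A B) {x : V}
    (hx : x ∉ B) : x ∈ A := by
  have hx' : x ∈ A ∪ B := h.1 ▸ Finset.mem_univ x
  rcases Finset.mem_union.mp hx' with h' | h'
  · exact h'
  · exact absurd h' hx

private lemma cov2 {E : V → V → Prop} {A B : Finset V} (h : IsSep E A B) {x : V}
    (hx : x ∉ A) : x ∈ B := by
  have hx' : x ∈ A ∪ B := h.1 ▸ Finset.mem_univ x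
  rcases Finset.mem_union.mp hx' with h' | h'
  · exact absurd h' hx
  · exact h'

private lemma sepchain_pairwise {C : List (Finset V × Finset V)}
    (h : List.Chain' (fun p q : Finset V × Finset V => p.1 ⊆ q.1 ∧ q.2 ⊆ p.2) C) :
    C.Pairwise (fun p q => p.1 ⊆ q.1 ∧ q.2 ⊆ p.2) := by
  have : IsTrans (Finset V × Finset V) (fun p q => p.1 ⊆ q.1 ∧ q.2 ⊆ p.2) :=
    ⟨fun a b c h1 h2 => ⟨h1.1.trans h2.1, h2.2.trans h1.2⟩⟩
  exact List.isChain_iff_pairwise.mp h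

private lemma snd_subset_head {C : List (Finset V × Finset V)}
    (h : List.Chain' (fun p q : Finset V × Finset V => p.1 ⊆ q.1 ∧ q.2 ⊆ p.2) C)
    {a p : Finset V × Finset V} (ha : C.head? = some a) (hp : p ∈ C) : p.2 ⊆ a.2 := by
  have hpw := sepchain_pairwise h
  cases C with
  | nil => simp at ha
  | cons x l =>
    rw [List.head?_cons, Option.some_inj] at ha
    subst ha
    rcases List.mem_cons.mp hp with rfl | hp'
    · exact subset_rfl
    · exact (List.rel_of_pairwise_cons hpw hp').2

private lemma fst_subset_last {C : List (Finset V × Finset V)}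
    (h : List.Chain' (fun p q : Finset V × Finset V => p.1 ⊆ q.1 ∧ q.2 ⊆ p.2) C)
    {b p : Finset V × Finset V} (hb : C.getLast? = some b) (hp : p ∈ C) : p.1 ⊆ b.1 := by
  have key : ∀ (L : List (Finset V × Finset V)),
      List.Chain' (fun p q : Finset V × Finset V => p.1 ⊆ q.1 ∧ q.2 ⊆ p.2) L →
      ∀ b, L.getLast? = some b → ∀ p ∈ L, p.1 ⊆ b.1 := by
    intro L
    induction L with
    | nil => intro _ b hb; simp at hb
    | cons x l ih =>
      intro hch b hb p hp
      cases l with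
      | nil =>
        simp only [List.getLast?_singleton, Option.some_inj] at hb
        subst hb
        rcases List.mem_cons.mp hp with rfl | hp'
        · exact subset_rfl
        · simp at hp'
      | cons y l' =>
        rw [List.getLast?_cons_cons] at hb
        have hchain := (List.isChain_cons_cons.mp hch)
        rcases List.mem_cons.mp hp with rfl | hp'
        · exact hchain.1.1.trans (ih hchain.2 b hb y (List.mem_cons_self))
        · exact ih hchain.2 b hb p hp'
  exact key C h b hb p hp

set_option maxHeartbeats 1000000 in
private lemma back (E : V → V → Prop) (S T : Finset V) (k : ℕ)
    (C : List (Finset V × Finset V)) (hC : IsSTChain E S T C) (hg : Gapless C)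
    (ho : orderLE C k) (hbig : k + 1 ≤ (Finset.univ \ (S ∪ T)).card) :
    ∃ C' v, IsSTChain E S T C' ∧ Gapless C' ∧ orderLE C' k ∧ v ∉ S ∧ v ∉ T ∧
      C'.dropLast.getLast?.map Prod.fst = some (Finset.univ \ insert v T) ∧
      (∀ p1, C.tail.head? = some p1 → p1.1 ≠ Finset.univ \ T →
        C'.take 2 = C.take 2 ∧ 3 ≤ C'.length ∧ v ∈ p1.2) := by
  classical
  obtain ⟨⟨hsep, hch⟩, hhead, hlast⟩ := hC
  obtain ⟨a0, ha0, ha02⟩ : ∃ a0, C.head? = some a0 ∧ a0.2 = Finset.univ \ S := by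
    cases h : C.head? with
    | none => rw [h] at hhead; simp at hhead
    | some a => exact ⟨a, rfl, by rw [h] at hhead; simpa using hhead⟩
  obtain ⟨z, hz, hz1⟩ : ∃ z, C.getLast? = some z ∧ z.1 = Finset.univ \ T := by
    cases h : C.getLast? with
    | none => rw [h] at hlast; simp at hlast
    | some a => exact ⟨a, rfl, by rw [h] at hlast; simpa using hlast⟩
  obtain ⟨t, rfl⟩ : ∃ t, C = a0 :: t := by
    cases C with
    | nil => simp at ha0
    | cons x t =>
      rw [List.head?_cons, Option.some_inj] at ha0
      exact ⟨t, by rw [ha0]⟩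
  -- the first component sets form a chain; useful inclusions
  have hST_inter : (Finset.univ \ T) ∩ (Finset.univ \ S) = Finset.univ \ (S ∪ T) := by
    ext x
    simp only [Finset.mem_inter, Finset.mem_sdiff, Finset.mem_univ, true_and,
      Finset.mem_union]
    tauto
  have ha0pred : a0.1 ≠ Finset.univ \ T := by
    intro contra
    have := ho a0 (List.mem_cons_self)
    rw [contra, ha02, hST_inter] at this
    omega
  set pred : (Finset V × Finset V) → Bool := fun p => decide (p.1 ≠ Finset.univ \ T)
    with hpreddef
  have hpred_iff : ∀ p : Finset V × Finset V, pred p = true ↔ p.1 ≠ Finset.univ \ T := by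
    intro p; simp [hpreddef]
  set P : List (Finset V × Finset V) := (a0 :: t).takeWhile pred with hPdef
  set Q : List (Finset V × Finset V) := (a0 :: t).dropWhile pred with hQdef
  have hPQ : P ++ Q = a0 :: t := by
    rw [hPdef, hQdef]; exact List.takeWhile_append_dropWhile (p := pred) (l := a0 :: t)
  have hQne : Q ≠ [] := by
    intro h0
    have hzmem : z ∈ a0 :: t := List.mem_of_mem_getLast? hz
    have hzP : z ∈ P := by
      rw [← hPQ, h0, List.append_nil] at hzmem; exact hzmem
    exact ((hpred_iff z).mp (List.mem_takeWhile_imp hzP)) hz1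
  have hP : P = a0 :: t.takeWhile pred := by
    rw [hPdef, List.takeWhile_cons_of_pos ((hpred_iff a0).mpr ha0pred)]
  have hPne : P ≠ [] := by rw [hP]; simp
  set pstar : Finset V × Finset V := P.getLast hPne with hpstardef
  have hpl : P.getLast? = some pstar := List.getLast?_eq_getLast_of_ne_nil hPne
  set q : Finset V × Finset V := Q.head hQne with hqdef
  have hQq : Q = q :: Q.tail := (List.cons_head_tail hQne).symm
  have hq1 : q.1 = Finset.univ \ T := by
    have := List.head_dropWhile_not pred (l := a0 :: t) (by rw [← hQdef]; exact hQne)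
    have h2 : pred q = false := this
    rw [hpreddef] at h2
    simpa using h2
  have hmemP : ∀ p ∈ P, p ∈ a0 :: t := by
    intro p hp; rw [← hPQ]; exact List.mem_append_left _ hp
  have hmemq : q ∈ a0 :: t := by
    rw [← hPQ, hQq]; exact List.mem_append_right _ (List.mem_cons_self)
  have hpstarP : pstar ∈ P := List.getLast_mem hPne
  have hpstarC : pstar ∈ a0 :: t := hmemP _ hpstarP
  -- chain decompositions
  have hchPQ := hch
  rw [← hPQ, hQq] at hchPQ
  obtain ⟨hchP, hchQ, hlinkall⟩ := List.isChain_append.mp hchPQ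
  have hlink : pstar.1 ⊆ q.1 ∧ q.2 ⊆ pstar.2 := hlinkall pstar hpl q rfl
  have hgPQ := hg
  rw [Gapless] at hgPQ
  rw [← hPQ, hQq] at hgPQ
  obtain ⟨hgP, hgQ, hglinkall⟩ := List.isChain_append.mp hgPQ
  have hglink := hglinkall pstar hpl q rfl
  have hpstarpred : pstar.1 ≠ Finset.univ \ T :=
    (hpred_iff pstar).mp (List.mem_takeWhile_imp hpstarP)
  have hne : pstar.1 ≠ q.1 := by rw [hq1]; exact hpstarpred
  have hssub : (q.1 \ pstar.1).Nonempty := by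
    rw [Finset.sdiff_nonempty]
    intro hsub
    exact hne (subset_antisymm hlink.1 hsub)
  have hsep_pstar : IsSep E pstar.1 pstar.2 := hsep pstar hpstarC
  have hsep_q : IsSep E q.1 q.2 := hsep q hmemq
  have hpstar2a0 : pstar.2 ⊆ a0.2 := snd_subset_head hch rfl hpstarC
  -- shared conditional helper
  have hcond0 : ∀ p1, (a0 :: t).tail.head? = some p1 → p1.1 ≠ Finset.univ \ T →
      (∃ W, P = a0 :: p1 :: W) ∧ (a0 :: t).take 2 = [a0, p1] ∧ pstar.2 ⊆ p1.2 := by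
    intro p1 h1 h2
    obtain ⟨t', rfl⟩ : ∃ t', t = p1 :: t' := by
      cases t with
      | nil => simp at h1
      | cons x t' =>
        simp only [List.tail_cons, List.head?_cons, Option.some_inj] at h1
        exact ⟨t', by rw [h1]⟩
    have hP2 : P = a0 :: p1 :: t'.takeWhile pred := by
      rw [hP, List.takeWhile_cons_of_pos ((hpred_iff p1).mpr h2)]
    refine ⟨⟨_, hP2⟩, by simp, ?_⟩
    -- pstar.2 ⊆ p1.2
    have hchP' : List.Chain' (fun p q : Finset V × Finset V => p.1 ⊆ q.1 ∧ q.2 ⊆ p.2)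
        (p1 :: t'.takeWhile pred) := by
      have := hchP
      rw [hP2] at this
      exact this.tail
    have hpl2 : (p1 :: t'.takeWhile pred).getLast? = some pstar := by
      have h' := hpl
      rw [hP2, List.getLast?_cons_cons] at h'
      exact h'
    exact snd_subset_head hchP' rfl (List.mem_of_mem_getLast? hpl2)
  -- case split on the gapless link
  rcases hglink with hcase | hcase
  · -- |q.1 \ pstar.1| ≤ 1 : truncate after q
    have hcard1 : (q.1 \ pstar.1).card = 1 :=
      le_antisymm hcase (Finset.card_pos.mpr hssub)
    obtain ⟨v, hv⟩ := Finset.card_eq_one.mp hcard1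
    have hv1 : v ∈ q.1 := by
      have : v ∈ q.1 \ pstar.1 := by rw [hv]; exact Finset.mem_singleton_self v
      exact (Finset.mem_sdiff.mp this).1
    have hv2 : v ∉ pstar.1 := by
      have : v ∈ q.1 \ pstar.1 := by rw [hv]; exact Finset.mem_singleton_self v
      exact (Finset.mem_sdiff.mp this).2
    have hvp2 : v ∈ pstar.2 := cov2 hsep_pstar hv2
    have hpstar1 : pstar.1 = Finset.univ \ insert v T := by
      have heq : pstar.1 = q.1 \ {v} := by
        ext x
        rw [Finset.mem_sdiff, Finset.mem_singleton]
        constructor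
        · intro hx; exact ⟨hlink.1 hx, fun hxv => hv2 (hxv ▸ hx)⟩
        · rintro ⟨hxq, hxv⟩
          by_contra hxp
          have hmem : x ∈ q.1 \ pstar.1 := Finset.mem_sdiff.mpr ⟨hxq, hxp⟩
          rw [hv, Finset.mem_singleton] at hmem
          exact hxv hmem
      rw [heq, hq1]
      ext x
      simp only [Finset.mem_sdiff, Finset.mem_singleton, Finset.mem_univ, true_and,
        Finset.mem_insert]
      tauto
    refine ⟨P ++ [q], v, ⟨⟨?_, ?_⟩, ?_, ?_⟩, ?_, ?_, ?_, ?_, ?_, ?_⟩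
    · intro p hp
      rcases List.mem_append.mp hp with hp' | hp'
      · exact hsep p (hmemP p hp')
      · rw [List.mem_singleton.mp hp']; exact hsep_q
    · exact List.isChain_append.mpr ⟨hchP, List.isChain_singleton q, by
        intro x hx y hy
        rw [hpl, Option.mem_def, Option.some_inj] at hx
        simp only [List.head?_cons, Option.mem_def, Option.some_inj] at hy
        subst hx; subst hy; exact hlink⟩
    · rw [hP]; simpa using ha02
    · rw [List.getLast?_concat]; simpa using hq1
    · exact List.isChain_append.mpr ⟨hgP, List.isChain_singleton q, by
        intro x hx y hy
        rw [hpl, Option.mem_def, Option.some_inj] at hx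
        simp only [List.head?_cons, Option.mem_def, Option.some_inj] at hy
        subst hx; subst hy; exact Or.inl hcase⟩
    · intro p hp
      rcases List.mem_append.mp hp with hp' | hp'
      · exact ho p (hmemP p hp')
      · rw [List.mem_singleton.mp hp']; exact ho q hmemq
    · -- v ∉ S
      have := hpstar2a0 hvp2
      rw [ha02] at this
      exact (Finset.mem_sdiff.mp this).2
    · -- v ∉ T
      rw [hq1] at hv1
      exact (Finset.mem_sdiff.mp hv1).2
    · rw [List.dropLast_concat, hpl]
      simpa using hpstar1
    · intro p1 h1 h2
      obtain ⟨⟨W, hPW⟩, htake, hsub⟩ := hcond0 p1 h1 h2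
      refine ⟨?_, ?_, hsub hvp2⟩
      · rw [hPW, htake]; simp
      · rw [hPW]; simp
  · -- insert a new separation (q.1.erase v, pstar.2)
    obtain ⟨v, hv⟩ := hssub
    have hv1 : v ∈ q.1 := (Finset.mem_sdiff.mp hv).1
    have hv2 : v ∉ pstar.1 := (Finset.mem_sdiff.mp hv).2
    have hvp2 : v ∈ pstar.2 := cov2 hsep_pstar hv2
    set mid : Finset V × Finset V := (q.1.erase v, pstar.2) with hmiddef
    have hsubmid : pstar.1 ⊆ q.1.erase v := by
      intro x hx
      exact Finset.mem_erase.mpr ⟨fun hxv => hv2 (hxv ▸ hx), hlink.1 hx⟩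
    have hsepmid : IsSep E mid.1 mid.2 := by
      constructor
      · apply Finset.eq_univ_iff_forall.mpr
        intro x
        by_cases hx : x ∈ pstar.2
        · exact Finset.mem_union_right _ hx
        · exact Finset.mem_union_left _ (hsubmid (cov1 hsep_pstar hx))
      · intro a ha hnb b hb hnb2
        have haq : a ∈ q.1 := Finset.mem_of_mem_erase ha
        have hap : a ∈ pstar.1 := cov1 hsep_pstar hnb
        by_cases hbv : b = v
        · subst hbv
          exact hsep_pstar.2 a hap hnb b hvp2 hv2
        · have hbq1 : b ∉ q.1 := fun hbq => hnb2 (Finset.mem_erase.mpr ⟨hbv, hbq⟩)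
          have hbq2 : b ∈ q.2 := cov2 hsep_q hbq1
          exact hsep_q.2 a haq (fun hh => hnb (hlink.2 hh)) b hbq2 hbq1
    have hordermid : (mid.1 ∩ mid.2).card ≤ k := by
      have h1 : q.1 ∩ pstar.2 ⊆ (q.1 ∩ q.2) ∪ (pstar.2 \ q.2) := by
        intro x hx
        rcases Finset.mem_inter.mp hx with ⟨hx1, hx2⟩
        by_cases hxq : x ∈ q.2
        · exact Finset.mem_union_left _ (Finset.mem_inter.mpr ⟨hx1, hxq⟩)
        · exact Finset.mem_union_right _ (Finset.mem_sdiff.mpr ⟨hx2, hxq⟩)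
      have h2 : (q.1 ∩ pstar.2).card ≤ k + 1 := by
        calc (q.1 ∩ pstar.2).card ≤ ((q.1 ∩ q.2) ∪ (pstar.2 \ q.2)).card :=
              Finset.card_le_card h1
          _ ≤ (q.1 ∩ q.2).card + (pstar.2 \ q.2).card := Finset.card_union_le _ _
          _ ≤ k + 1 := add_le_add (ho q hmemq) hcase
      have hvmem : v ∈ q.1 ∩ pstar.2 := Finset.mem_inter.mpr ⟨hv1, hvp2⟩
      have heq : mid.1 ∩ mid.2 = (q.1 ∩ pstar.2).erase v := by
        ext x
        simp only [hmiddef, Finset.mem_inter, Finset.mem_erase]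
        tauto
      rw [heq, Finset.card_erase_of_mem hvmem]
      omega
    have hlink1 : pstar.1 ⊆ mid.1 ∧ mid.2 ⊆ pstar.2 := ⟨hsubmid, subset_rfl⟩
    have hlink2 : mid.1 ⊆ q.1 ∧ q.2 ⊆ mid.2 := ⟨Finset.erase_subset _ _, hlink.2⟩
    refine ⟨P ++ [mid, q], v, ⟨⟨?_, ?_⟩, ?_, ?_⟩, ?_, ?_, ?_, ?_, ?_, ?_⟩
    · intro p hp
      rcases List.mem_append.mp hp with hp' | hp'
      · exact hsep p (hmemP p hp')
      · rcases List.mem_cons.mp hp' with rfl | hp''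
        · exact hsepmid
        · rw [List.mem_singleton.mp hp'']; exact hsep_q
    · refine List.isChain_append.mpr ⟨hchP, ?_, ?_⟩
      · exact List.isChain_pair.mpr hlink2
      · intro x hx y hy
        rw [hpl, Option.mem_def, Option.some_inj] at hx
        simp only [List.head?_cons, Option.mem_def, Option.some_inj] at hy
        subst hx; subst hy; exact hlink1
    · rw [hP]; simpa using ha02
    · have : P ++ [mid, q] = (P ++ [mid]) ++ [q] := by simp
      rw [this, List.getLast?_concat]; simpa using hq1
    · refine List.isChain_append.mpr ⟨hgP, ?_, ?_⟩
      · refine List.isChain_pair.mpr (Or.inl ?_)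
        have : q.1 \ mid.1 ⊆ {v} := by
          intro x hx
          rcases Finset.mem_sdiff.mp hx with ⟨hx1, hx2⟩
          rw [Finset.mem_singleton]
          by_contra hxv
          exact hx2 (Finset.mem_erase.mpr ⟨hxv, hx1⟩)
        calc (q.1 \ mid.1).card ≤ ({v} : Finset V).card := Finset.card_le_card this
          _ = 1 := Finset.card_singleton v
      · intro x hx y hy
        rw [hpl, Option.mem_def, Option.some_inj] at hx
        simp only [List.head?_cons, Option.mem_def, Option.some_inj] at hy
        subst hx; subst hy
        exact Or.inr (by simp [hmiddef])
    · intro p hp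
      rcases List.mem_append.mp hp with hp' | hp'
      · exact ho p (hmemP p hp')
      · rcases List.mem_cons.mp hp' with rfl | hp''
        · exact hordermid
        · rw [List.mem_singleton.mp hp'']; exact ho q hmemq
    · have := hpstar2a0 hvp2
      rw [ha02] at this
      exact (Finset.mem_sdiff.mp this).2
    · rw [hq1] at hv1
      exact (Finset.mem_sdiff.mp hv1).2
    · have : P ++ [mid, q] = (P ++ [mid]) ++ [q] := by simp
      rw [this, List.dropLast_concat, List.getLast?_concat]
      have heq2 : mid.1 = Finset.univ \ insert v T := by
        show q.1.erase v = _
        rw [hq1, Finset.sdiff_insert]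
      simpa using heq2
    · intro p1 h1 h2
      obtain ⟨⟨W, hPW⟩, htake, hsub⟩ := hcond0 p1 h1 h2
      refine ⟨?_, ?_, hsub hvp2⟩
      · rw [hPW, htake]; simp
      · rw [hPW]; simp

private def revc (C : List (Finset V × Finset V)) : List (Finset V × Finset V) :=
  (C.map Prod.swap).reverse

private lemma mem_revc {C : List (Finset V × Finset V)} {p : Finset V × Finset V} :
    p ∈ revc C ↔ ∃ q ∈ C, Prod.swap q = p := by
  simp [revc]

private lemma revc_isSTChain {E : V → V → Prop} {S T : Finset V}
    {C : List (Finset V × Finset V)} (h : IsSTChain E S T C) :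
    IsSTChain (fun a b => E b a) T S (revc C) := by
  obtain ⟨⟨hsep, hch⟩, hh, hl⟩ := h
  refine ⟨⟨?_, ?_⟩, ?_, ?_⟩
  · intro p hp
    obtain ⟨q, hq, rfl⟩ := mem_revc.mp hp
    obtain ⟨hu, he⟩ := hsep q hq
    exact ⟨by rw [Finset.union_comm]; exact hu,
      fun a ha ha' b hb hb' hE => he b hb hb' a ha ha' hE⟩
  · rw [revc, List.Chain', List.isChain_reverse, List.isChain_map]
    exact List.IsChain.imp (fun a b hab => ⟨hab.2, hab.1⟩) hch
  · show ((C.map Prod.swap).reverse.head?).map Prod.snd = some (Finset.univ \ T)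
    rw [List.head?_reverse, List.getLast?_map, Option.map_map]
    exact hl
  · show ((C.map Prod.swap).reverse.getLast?).map Prod.fst = some (Finset.univ \ S)
    rw [List.getLast?_reverse, List.head?_map, Option.map_map]
    exact hh

private lemma revc_gapless {C : List (Finset V × Finset V)} (h : Gapless C) :
    Gapless (revc C) := by
  rw [Gapless, revc, List.Chain', List.isChain_reverse, List.isChain_map]
  exact List.IsChain.imp (fun a b hab => hab.symm) h

private lemma revc_orderLE {C : List (Finset V × Finset V)} {k : ℕ} (h : orderLE C k) :
    orderLE (revc C) k := by
  intro p hp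
  obtain ⟨q, hq, rfl⟩ := mem_revc.mp hp
  have := h q hq
  simpa [Finset.inter_comm] using this

private lemma revc_tail_head (C : List (Finset V × Finset V)) :
    (revc C).tail.head?.map Prod.snd = C.dropLast.getLast?.map Prod.fst := by
  rw [revc, List.tail_reverse, List.head?_reverse,
    ← List.map_dropLast, List.getLast?_map, Option.map_map]
  rfl

end BranchingAux

/-- The branching recurrence: if `G` has a gapless `S`–`T` chain of order at most `k`
and `|V ∖ (S ∪ T)| ≥ k + 2`, then there are such a chain and distinct vertices `u`, `v`
so that dropping the first and/or last separation gives `(S ∪ {u})`–`T`,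
`S`–`(T ∪ {v})` and `(S ∪ {u})`–`(T ∪ {v})` chains. -/
theorem branching_recurrence (E : V → V → Prop) [DecidableRel E]
    (hirr : Irreflexive E) (S T : Finset V) (hST : Disjoint S T) (k : ℕ)
    (h : ∃ C : List (Finset V × Finset V), IsSTChain E S T C ∧ Gapless C ∧ orderLE C k)
    (hbig : k + 2 ≤ (Finset.univ \ (S ∪ T)).card) :
    ∃ (C : List (Finset V × Finset V)) (u v : V),
      IsSTChain E S T C ∧ Gapless C ∧ orderLE C k ∧ u ≠ v ∧
      u ∉ S ∪ closedIn E T ∧ v ∉ T ∪ closedOut E S ∧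
      IsSTChain E (insert u S) T C.tail ∧
      IsSTChain E S (insert v T) C.dropLast ∧
      IsSTChain E (insert u S) (insert v T) C.tail.dropLast := by
  classical
  obtain ⟨C0, hC0, hg0, ho0⟩ := h
  have hbig1 : k + 1 ≤ (Finset.univ \ (S ∪ T)).card := by omega
  have hbig1' : k + 1 ≤ (Finset.univ \ (T ∪ S)).card := by rwa [Finset.union_comm]
  obtain ⟨C1', u, hst1, hg1, ho1, huT, huS, hpen1, -⟩ :=
    back (fun a b => E b a) T S k (revc C0) (revc_isSTChain hC0) (revc_gapless hg0)
      (revc_orderLE ho0) hbig1'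
  have hst1' : IsSTChain E S T (revc C1') := revc_isSTChain hst1
  have hg1' : Gapless (revc C1') := revc_gapless hg1
  have ho1' : orderLE (revc C1') k := revc_orderLE ho1
  have htail1 : (revc C1').tail.head?.map Prod.snd = some (Finset.univ \ insert u S) := by
    rw [revc_tail_head]; exact hpen1
  obtain ⟨p1, hp1, hp12⟩ : ∃ p1, (revc C1').tail.head? = some p1 ∧
      p1.2 = Finset.univ \ insert u S := by
    cases h' : (revc C1').tail.head? with
    | none => rw [h'] at htail1; simp at htail1
    | some a => exact ⟨a, rfl, by rw [h'] at htail1; simpa using htail1⟩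
  have hp1mem : p1 ∈ revc C1' := List.mem_of_mem_tail (List.mem_of_mem_head? hp1)
  have hp1ne : p1.1 ≠ Finset.univ \ T := by
    intro contra
    have hcard := ho1' p1 hp1mem
    rw [contra, hp12] at hcard
    have heq : (Finset.univ \ T) ∩ (Finset.univ \ insert u S)
        = (Finset.univ \ (S ∪ T)).erase u := by
      ext x
      simp only [Finset.mem_inter, Finset.mem_sdiff, Finset.mem_univ, true_and,
        Finset.mem_insert, Finset.mem_erase, Finset.mem_union]
      tauto
    rw [heq] at hcard
    have humem : u ∈ Finset.univ \ (S ∪ T) := by simp [huS, huT]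
    rw [Finset.card_erase_of_mem humem] at hcard
    omega
  obtain ⟨C2, v, hst2, hg2, ho2, hvS, hvT, hpen2, hcond⟩ :=
    back E S T k (revc C1') hst1' hg1' ho1' hbig1
  obtain ⟨htake, hlen3, hvp1⟩ := hcond p1 hp1 hp1ne
  rw [hp12, Finset.mem_sdiff] at hvp1
  have hvu : v ≠ u := fun h' => hvp1.2 (Finset.mem_insert.mpr (Or.inl h'))
  have hvS' : v ∉ S := fun h' => hvp1.2 (Finset.mem_insert.mpr (Or.inr h'))
  obtain ⟨c0, rest1, hC1eq⟩ : ∃ c0 rest1, revc C1' = c0 :: p1 :: rest1 := by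
    cases hA : revc C1' with
    | nil => rw [hA] at hp1; simp at hp1
    | cons x t1 =>
      cases hB : t1 with
      | nil => rw [hA, hB] at hp1; simp at hp1
      | cons y t2 =>
        rw [hA, hB] at hp1
        simp only [List.tail_cons, List.head?_cons, Option.some_inj] at hp1
        exact ⟨x, t2, by rw [hp1]⟩
  have htake2 : C2.take 2 = [c0, p1] := by rw [htake, hC1eq]; rfl
  obtain ⟨M, rfl⟩ : ∃ M, C2 = c0 :: p1 :: M := by
    cases hA : C2 with
    | nil => rw [hA] at htake2; simp at htake2
    | cons x t1 =>
      cases hB : t1 with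
      | nil => rw [hA, hB] at htake2; simp at htake2
      | cons y t2 =>
        rw [hA, hB] at htake2
        simp only [List.take_succ_cons, List.take_zero, List.cons.injEq, and_true] at htake2
        exact ⟨t2, by rw [htake2.1, htake2.2]⟩
  obtain ⟨m0, M', rfl⟩ : ∃ m0 M', M = m0 :: M' := by
    cases M with
    | nil => simp at hlen3
    | cons a b => exact ⟨a, b, rfl⟩
  obtain ⟨⟨hsep2, hch2⟩, hh2, hl2⟩ := hst2
  have hc02 : c0.2 = Finset.univ \ S := by simpa using hh2
  obtain ⟨z2, hz2, hz21⟩ : ∃ z2, (c0 :: p1 :: m0 :: M').getLast? = some z2 ∧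
      z2.1 = Finset.univ \ T := by
    cases h' : (c0 :: p1 :: m0 :: M').getLast? with
    | none => simp at h'
    | some a => exact ⟨a, rfl, by rw [h'] at hl2; simpa using hl2⟩
  obtain ⟨p2, hp2, hp21⟩ : ∃ p2, (c0 :: p1 :: m0 :: M').dropLast.getLast? = some p2 ∧
      p2.1 = Finset.univ \ insert v T := by
    cases h' : (c0 :: p1 :: m0 :: M').dropLast.getLast? with
    | none => rw [h'] at hpen2; simp at hpen2
    | some a => exact ⟨a, rfl, by rw [h'] at hpen2; simpa using hpen2⟩
  have hp1mem2 : p1 ∈ c0 :: p1 :: m0 :: M' := by simp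
  have hp2mem : p2 ∈ c0 :: p1 :: m0 :: M' :=
    (List.dropLast_sublist _).subset (List.mem_of_mem_getLast? hp2)
  have hsep_p1 : IsSep E p1.1 p1.2 := hsep2 p1 hp1mem2
  have hsep_p2 : IsSep E p2.1 p2.2 := hsep2 p2 hp2mem
  have hp11sub : p1.1 ⊆ Finset.univ \ T := by
    have := fst_subset_last hch2 hz2 hp1mem2
    rwa [hz21] at this
  have hp22sub : p2.2 ⊆ Finset.univ \ S := by
    have := snd_subset_head hch2 rfl hp2mem
    rwa [hc02] at this
  have hu1 : u ∈ p1.1 := by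
    apply cov1 hsep_p1
    rw [hp12]
    simp
  have hv2 : v ∈ p2.2 := by
    apply cov2 hsep_p2
    rw [hp21]
    simp
  refine ⟨c0 :: p1 :: m0 :: M', u, v, ⟨⟨hsep2, hch2⟩, hh2, hl2⟩, hg2, ho2,
    Ne.symm hvu, ?_, ?_, ?_, ?_, ?_⟩
  · -- u ∉ S ∪ closedIn E T
    intro hu
    rcases Finset.mem_union.mp hu with h' | h'
    · exact huS h'
    · simp only [closedIn, Finset.mem_biUnion, Finset.mem_insert, Finset.mem_filter,
        Finset.mem_univ, true_and] at h'
      obtain ⟨t0, ht0, hcase⟩ := h'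
      rcases hcase with rfl | hE
      · exact huT ht0
      · have ht01 : t0 ∉ p1.1 := fun hh => (Finset.mem_sdiff.mp (hp11sub hh)).2 ht0
        have ht02 : t0 ∈ p1.2 := cov2 hsep_p1 ht01
        have hu2 : u ∉ p1.2 := by rw [hp12]; simp
        exact hsep_p1.2 u hu1 hu2 t0 ht02 ht01 hE
  · -- v ∉ T ∪ closedOut E S
    intro hv
    rcases Finset.mem_union.mp hv with h' | h'
    · exact hvT h'
    · simp only [closedOut, Finset.mem_biUnion, Finset.mem_insert, Finset.mem_filter,
        Finset.mem_univ, true_and] at h'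
      obtain ⟨s0, hs0, hcase⟩ := h'
      rcases hcase with rfl | hE
      · exact hvS' hs0
      · have hs02 : s0 ∉ p2.2 := fun hh => (Finset.mem_sdiff.mp (hp22sub hh)).2 hs0
        have hs01 : s0 ∈ p2.1 := cov1 hsep_p2 hs02
        have hv21 : v ∉ p2.1 := by rw [hp21]; simp
        exact hsep_p2.2 s0 hs01 hs02 v hv2 hv21 hE
  · -- tail chain
    refine ⟨⟨?_, hch2.tail⟩, ?_, ?_⟩
    · intro p hp; exact hsep2 p (List.mem_cons_of_mem _ hp)
    · show (some p1).map Prod.snd = _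
      rw [Option.map_some, hp12]
    · show ((p1 :: m0 :: M').getLast?).map Prod.fst = _
      rw [← List.getLast?_cons_cons (a := c0)]
      exact hl2
  · -- dropLast chain
    have hdrop : (c0 :: p1 :: m0 :: M').dropLast = c0 :: p1 :: (m0 :: M').dropLast := rfl
    refine ⟨⟨?_, List.IsChain.prefix hch2 (List.dropLast_prefix _)⟩, ?_, ?_⟩
    · intro p hp; exact (List.dropLast_sublist _).subset hp
      |> fun hh => hsep2 p hh
    · rw [hdrop]
      show (some c0).map Prod.snd = _
      rw [Option.map_some, hc02]
    · rw [hp2]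
      rw [Option.map_some, hp21]
  · -- tail.dropLast chain
    have hdrop2 : (p1 :: m0 :: M').dropLast = p1 :: (m0 :: M').dropLast := rfl
    refine ⟨⟨?_, List.IsChain.prefix hch2.tail (List.dropLast_prefix _)⟩, ?_, ?_⟩
    · intro p hp
      exact hsep2 p (List.mem_cons_of_mem _ ((List.dropLast_sublist _).subset hp))
    · show ((p1 :: m0 :: M').dropLast.head?).map Prod.snd = _
      rw [hdrop2]
      show (some p1).map Prod.snd = _
      rw [Option.map_some, hp12]
    · show ((p1 :: m0 :: M').dropLast.getLast?).map Prod.fst = _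
      rw [hdrop2]
      have hdrop' : (c0 :: p1 :: m0 :: M').dropLast
          = c0 :: p1 :: (m0 :: M').dropLast := rfl
      rw [hdrop', List.getLast?_cons_cons] at hp2
      rw [hp2, Option.map_some, hp21]

end AlmostSemicomplete
end

section
/- Let G be an h-semicomplete digraph, U ⊆ V(G), and k a positive integer. Then the number of vertices v ∈ V(G) ∖ U with d⁺(U ∪ {v}) ≤ k is at most h + 2k + 1. The analogous statement with out-degrees replaced by in-degrees (i.e., vertices v with d⁻(U ∪ {v}) ≤ k) also holds. -/
namespace AlmostSemicomplete

variable {V : Type} [Fintype V] [DecidableEq V]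

lemma mem_openOut_of (E : V → V → Prop) [DecidableRel E] {U : Finset V} {v u : V}
    (hv : v ∈ U) (hE : E v u) (hu : u ∉ U) : u ∈ openOut E U := by
  simp only [openOut, closedOut, Finset.mem_sdiff, Finset.mem_biUnion]
  exact ⟨⟨v, hv, by simp [hE]⟩, hu⟩

lemma aux_card_extensions (E : V → V → Prop) [DecidableRel E] (h k : ℕ)
    (hsemi : HSemicomplete E h) (U : Finset V) :
    (Finset.univ.filter fun v => v ∉ U ∧ dOut E (insert v U) ≤ k).card ≤ h + 2 * k + 1 := by
  classical
  set W := Finset.univ.filter fun v => v ∉ U ∧ dOut E (insert v U) ≤ k with hW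
  have key : ∀ v ∈ W, (W.filter fun u => u ≠ v ∧ E v u).card ≤ k := by
    intro v hv
    simp only [hW, Finset.mem_filter] at hv
    refine le_trans (Finset.card_le_card ?_) hv.2.2
    intro u hu
    simp only [hW, Finset.mem_filter] at hu
    exact mem_openOut_of E (Finset.mem_insert_self v U)
      hu.2.2 (by simp [hu.2.1, hu.1.2.1])
  set F1 := W.offDiag.filter fun p => E p.1 p.2 with hF1
  set F2 := W.offDiag.filter fun p => E p.2 p.1 with hF2
  set F3 := W.offDiag.filter fun p => ¬ E p.1 p.2 ∧ ¬ E p.2 p.1 with hF3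
  have hcover : W.offDiag ⊆ F1 ∪ F2 ∪ F3 := by
    intro p hp
    simp only [hF1, hF2, hF3, Finset.mem_union, Finset.mem_filter]
    by_cases h12 : E p.1 p.2
    · exact Or.inl (Or.inl ⟨hp, h12⟩)
    · by_cases h21 : E p.2 p.1
      · exact Or.inl (Or.inr ⟨hp, h21⟩)
      · exact Or.inr ⟨hp, h12, h21⟩
  have b1 : F1.card ≤ W.card * k := by
    have hsub : F1 ⊆ W.biUnion fun v =>
        (W.filter fun u => u ≠ v ∧ E v u).image (Prod.mk v) := by
      intro p hp
      simp only [hF1, Finset.mem_filter, Finset.mem_offDiag] at hp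
      simp only [Finset.mem_biUnion, Finset.mem_image, Finset.mem_filter]
      exact ⟨p.1, hp.1.1, p.2, ⟨hp.1.2.1, hp.1.2.2.symm, hp.2⟩, rfl⟩
    refine le_trans (Finset.card_le_card hsub) (le_trans (Finset.card_biUnion_le) ?_)
    calc ∑ v ∈ W, ((W.filter fun u => u ≠ v ∧ E v u).image (Prod.mk v)).card
        ≤ ∑ v ∈ W, k := by
          refine Finset.sum_le_sum fun v hv => le_trans Finset.card_image_le (key v hv)
      _ = W.card * k := by simp [Finset.sum_const, mul_comm]
  have b2 : F2.card ≤ W.card * k := by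
    have hsub : F2 ⊆ W.biUnion fun v =>
        (W.filter fun u => u ≠ v ∧ E v u).image (fun u => (u, v)) := by
      intro p hp
      simp only [hF2, Finset.mem_filter, Finset.mem_offDiag] at hp
      simp only [Finset.mem_biUnion, Finset.mem_image, Finset.mem_filter]
      exact ⟨p.2, hp.1.2.1, p.1, ⟨hp.1.1, hp.1.2.2, hp.2⟩, rfl⟩
    refine le_trans (Finset.card_le_card hsub) (le_trans (Finset.card_biUnion_le) ?_)
    calc ∑ v ∈ W, ((W.filter fun u => u ≠ v ∧ E v u).image (fun u => (u, v))).card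
        ≤ ∑ v ∈ W, k := by
          refine Finset.sum_le_sum fun v hv => le_trans Finset.card_image_le (key v hv)
      _ = W.card * k := by simp [Finset.sum_const, mul_comm]
  have b3 : F3.card ≤ W.card * h := by
    have hsub : F3 ⊆ W.biUnion fun v =>
        (Finset.univ.filter fun u => u ≠ v ∧ ¬ E u v ∧ ¬ E v u).image (Prod.mk v) := by
      intro p hp
      simp only [hF3, Finset.mem_filter, Finset.mem_offDiag] at hp
      simp only [Finset.mem_biUnion, Finset.mem_image, Finset.mem_filter]
      exact ⟨p.1, hp.1.1, p.2, ⟨Finset.mem_univ _, hp.1.2.2.symm, hp.2.2, hp.2.1⟩, rfl⟩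
    refine le_trans (Finset.card_le_card hsub) (le_trans (Finset.card_biUnion_le) ?_)
    calc ∑ v ∈ W, ((Finset.univ.filter fun u => u ≠ v ∧ ¬ E u v ∧ ¬ E v u).image
          (Prod.mk v)).card
        ≤ ∑ v ∈ W, h := by
          refine Finset.sum_le_sum fun v hv => le_trans Finset.card_image_le (hsemi v)
      _ = W.card * h := by simp [Finset.sum_const, mul_comm]
  have hbig : W.card * W.card - W.card ≤ W.card * (2 * k + h) := by
    calc W.card * W.card - W.card = W.offDiag.card := (Finset.offDiag_card W).symm
      _ ≤ (F1 ∪ F2 ∪ F3).card := Finset.card_le_card hcover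
      _ ≤ F1.card + F2.card + F3.card :=
          le_trans (Finset.card_union_le _ _)
            (by exact Nat.add_le_add_right (Finset.card_union_le _ _) _)
      _ ≤ W.card * k + W.card * k + W.card * h := by
          exact Nat.add_le_add (Nat.add_le_add b1 b2) b3
      _ = W.card * (2 * k + h) := by ring
  rcases Nat.eq_zero_or_pos W.card with hm | hm
  · omega
  · have h1 : W.card * (W.card - 1) ≤ W.card * (2 * k + h) := by
      rwa [Nat.mul_sub, mul_one]
    have := Nat.le_of_mul_le_mul_left h1 hm
    omega

/-- In an `h`-semicomplete digraph, for any `U ⊆ V(G)` and `k > 0`, the number of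
vertices `v ∉ U` with `d⁺(U ∪ {v}) ≤ k` is at most `h + 2k + 1`; similarly for
in-degrees. -/
theorem card_extensions_le (E : V → V → Prop) [DecidableRel E]
    (hirr : Irreflexive E) (h k : ℕ) (hk : 0 < k)
    (hsemi : HSemicomplete E h) (U : Finset V) :
    (Finset.univ.filter fun v => v ∉ U ∧ dOut E (insert v U) ≤ k).card ≤ h + 2 * k + 1 ∧
    (Finset.univ.filter fun v => v ∉ U ∧ dIn E (insert v U) ≤ k).card ≤ h + 2 * k + 1 := by
  constructor
  · exact aux_card_extensions E h k hsemi U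
  · letI : DecidableRel (fun a b : V => E b a) := fun a b => ‹DecidableRel E› b a
    have hsemi' : HSemicomplete (fun a b : V => E b a) h := by
      intro v
      refine le_trans (le_of_eq (congrArg Finset.card ?_)) (hsemi v)
      ext u
      simp only [Finset.mem_filter]
      tauto
    have H := aux_card_extensions (fun a b : V => E b a) h k hsemi' U
    unfold dOut openOut closedOut at H
    unfold dIn openIn closedIn
    exact H

end AlmostSemicomplete
end

section
/- Let G be a digraph, S and T disjoint vertex sets, and (X,Y) a minimum S–T separation of G. Then μ(S, Y∖X) + μ(X∖Y, T) = μ(S,T), where μ(S,T) = 2·|V(G) ∖ (N⁺[S] ∪ N⁻[T])| + |N⁺(S) Δ N⁻(T)| and Δ denotes symmetric difference. -/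
namespace AlmostSemicomplete

variable {V : Type} [Fintype V] [DecidableEq V]

lemma card_eq_sum_indicator (W : Finset V) :
    W.card = ∑ v : V, if v ∈ W then 1 else 0 := by
  rw [Finset.sum_ite_mem, Finset.univ_inter, Finset.card_eq_sum_ones]

set_option maxHeartbeats 2000000 in
/-- `μ` splits additively over a minimum `S`–`T` separation:
`μ(S, Y∖X) + μ(X∖Y, T) = μ(S, T)`. -/
theorem mu_additive (E : V → V → Prop) [DecidableRel E] (hirr : Irreflexive E)
    (S T : Finset V) (hST : Disjoint S T)
    (X Y : Finset V) (hmin : IsMinSTSep E S T X Y) :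
    mu E S (Y \ X) + mu E (X \ Y) T = mu E S T := by
  obtain ⟨⟨⟨hunion, hedge⟩, hSY, hTX⟩, hminord⟩ := hmin
  have hxy : ∀ v : V, v ∈ X ∨ v ∈ Y := by
    intro v
    have : v ∈ X ∪ Y := hunion ▸ Finset.mem_univ v
    exact Finset.mem_union.mp this
  have hSnotY : ∀ v ∈ S, v ∉ Y := by
    intro v hv hvY
    exact Finset.notMem_empty v (hSY ▸ Finset.mem_inter.mpr ⟨hv, hvY⟩)
  have hTnotX : ∀ v ∈ T, v ∉ X := by
    intro v hv hvX
    exact Finset.notMem_empty v (hTX ▸ Finset.mem_inter.mpr ⟨hv, hvX⟩)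
  have hSX : ∀ v ∈ S, v ∈ X := fun v hv => (hxy v).resolve_right (hSnotY v hv)
  have hTY : ∀ v ∈ T, v ∈ Y := fun v hv => (hxy v).resolve_left (hTnotX v hv)
  -- A := N⁺[S] ⊆ X, B := N⁻[T] ⊆ Y
  have hAX : ∀ v ∈ closedOut E S, v ∈ X := by
    intro v hv
    rcases mem_closedOut'.mp hv with h | ⟨u, hu, h⟩
    · exact hSX v h
    · by_contra hvX
      have hvY : v ∈ Y := (hxy v).resolve_left hvX
      exact hedge u (hSX u hu) (hSnotY u hu) v hvY hvX h
  have hBY : ∀ v ∈ closedIn E T, v ∈ Y := by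
    intro v hv
    rcases mem_closedIn'.mp hv with h | ⟨u, hu, h⟩
    · exact hTY v h
    · by_contra hvY
      have hvX : v ∈ X := (hxy v).resolve_right hvY
      exact hedge v hvX hvY u (hTY u hu) (hTnotX u hu) h
  -- N⁺[X∖Y] = X
  have hXco : closedOut E (X \ Y) = X := by
    apply Finset.ext
    intro v
    rw [mem_closedOut']
    constructor
    · rintro (h | ⟨u, hu, h⟩)
      · exact (Finset.mem_sdiff.mp h).1
      · obtain ⟨huX, huY⟩ := Finset.mem_sdiff.mp hu
        by_contra hvX
        exact hedge u huX huY v ((hxy v).resolve_left hvX) hvX h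
    · intro hvX
      by_cases hvY : v ∈ Y
      · -- v ∈ X ∩ Y : use minimality
        by_contra hcon
        push_neg at hcon
        obtain ⟨-, hnoedge⟩ := hcon
        have hsep : IsSTSep E S T (X \ {v}) Y := by
          refine ⟨⟨?_, ?_⟩, hSY, ?_⟩
          · apply Finset.ext
            intro w
            simp only [Finset.mem_union, Finset.mem_sdiff, Finset.mem_singleton,
              Finset.mem_univ, iff_true]
            by_cases hw : w = v
            · exact .inr (hw ▸ hvY)
            · rcases hxy w with h | h
              · exact .inl ⟨h, hw⟩
              · exact .inr h
          · intro a ha haY b hbY hb hE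
            obtain ⟨haX, hav⟩ := Finset.mem_sdiff.mp ha
            by_cases hbX : b ∈ X
            · have hbv : b = v := by
                by_contra hbv
                exact hb (Finset.mem_sdiff.mpr ⟨hbX, fun h => hbv (Finset.mem_singleton.mp h)⟩)
              exact hnoedge a (Finset.mem_sdiff.mpr ⟨haX, haY⟩) (hbv ▸ hE)
            · exact hedge a haX haY b hbY hbX hE
          · rw [Finset.eq_empty_iff_forall_notMem]
            intro w hw
            obtain ⟨hwT, hwX⟩ := Finset.mem_inter.mp hw
            exact hTnotX w hwT (Finset.mem_sdiff.mp hwX).1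
        have hord := hminord _ _ hsep
        have heq : (X \ {v}) ∩ Y = (X ∩ Y).erase v := by
          apply Finset.ext
          intro w
          simp only [Finset.mem_inter, Finset.mem_sdiff, Finset.mem_singleton,
            Finset.mem_erase]
          tauto
        rw [heq] at hord
        have hvXY : v ∈ X ∩ Y := Finset.mem_inter.mpr ⟨hvX, hvY⟩
        have := Finset.card_erase_lt_of_mem hvXY
        omega
      · exact .inl (Finset.mem_sdiff.mpr ⟨hvX, hvY⟩)
  -- N⁻[Y∖X] = Y
  have hYci : closedIn E (Y \ X) = Y := by
    apply Finset.ext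
    intro v
    rw [mem_closedIn']
    constructor
    · rintro (h | ⟨u, hu, h⟩)
      · exact (Finset.mem_sdiff.mp h).1
      · obtain ⟨huY, huX⟩ := Finset.mem_sdiff.mp hu
        by_contra hvY
        exact hedge v ((hxy v).resolve_right hvY) hvY u huY huX h
    · intro hvY
      by_cases hvX : v ∈ X
      · by_contra hcon
        push_neg at hcon
        obtain ⟨-, hnoedge⟩ := hcon
        have hsep : IsSTSep E S T X (Y \ {v}) := by
          refine ⟨⟨?_, ?_⟩, ?_, hTX⟩
          · apply Finset.ext
            intro w
            simp only [Finset.mem_union, Finset.mem_sdiff, Finset.mem_singleton,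
              Finset.mem_univ, iff_true]
            by_cases hw : w = v
            · exact .inl (hw ▸ hvX)
            · rcases hxy w with h | h
              · exact .inl h
              · exact .inr ⟨h, hw⟩
          · intro a haX ha b hb hbX hE
            obtain ⟨hbY, hbv⟩ := Finset.mem_sdiff.mp hb
            by_cases haY : a ∈ Y
            · have hav : a = v := by
                by_contra hav
                exact ha (Finset.mem_sdiff.mpr ⟨haY, fun h => hav (Finset.mem_singleton.mp h)⟩)
              exact hnoedge b (Finset.mem_sdiff.mpr ⟨hbY, hbX⟩) (hav ▸ hE)
            · exact hedge a haX haY b hbY hbX hE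
          · rw [Finset.eq_empty_iff_forall_notMem]
            intro w hw
            obtain ⟨hwS, hwY⟩ := Finset.mem_inter.mp hw
            exact hSnotY w hwS (Finset.mem_sdiff.mp hwY).1
        have hord := hminord _ _ hsep
        have heq : X ∩ (Y \ {v}) = (X ∩ Y).erase v := by
          apply Finset.ext
          intro w
          simp only [Finset.mem_inter, Finset.mem_sdiff, Finset.mem_singleton,
            Finset.mem_erase]
          tauto
        rw [heq] at hord
        have hvXY : v ∈ X ∩ Y := Finset.mem_inter.mpr ⟨hvX, hvY⟩
        have := Finset.card_erase_lt_of_mem hvXY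
        omega
      · exact .inl (Finset.mem_sdiff.mpr ⟨hvY, hvX⟩)
  have hSA : ∀ v ∈ S, v ∈ closedOut E S := fun v hv => mem_closedOut'.mpr (.inl hv)
  have hTB : ∀ v ∈ T, v ∈ closedIn E T := fun v hv => mem_closedIn'.mpr (.inl hv)
  -- unfold mu and rewrite the neighborhoods of X∖Y and Y∖X
  unfold mu openOut openIn
  rw [hXco, hYci, Finset.sdiff_sdiff_self_left, Finset.sdiff_sdiff_self_left]
  rw [card_eq_sum_indicator (Finset.univ \ (closedOut E S ∪ Y)),
    card_eq_sum_indicator (symmDiff (closedOut E S \ S) (Y ∩ X)),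
    card_eq_sum_indicator (Finset.univ \ (X ∪ closedIn E T)),
    card_eq_sum_indicator (symmDiff (X ∩ Y) (closedIn E T \ T)),
    card_eq_sum_indicator (Finset.univ \ (closedOut E S ∪ closedIn E T)),
    card_eq_sum_indicator (symmDiff (closedOut E S \ S) (closedIn E T \ T)),
    Finset.mul_sum, Finset.mul_sum, Finset.mul_sum,
    ← Finset.sum_add_distrib, ← Finset.sum_add_distrib, ← Finset.sum_add_distrib,
    ← Finset.sum_add_distrib]
  apply Finset.sum_congr rfl
  intro v _
  have h1 := hxy v
  have h2 := hAX v
  have h3 := hBY v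
  have h4 := hSnotY v
  have h5 := hTnotX v
  have h6 := hSA v
  have h7 := hTB v
  simp only [Finset.mem_sdiff, Finset.mem_union, Finset.mem_inter, Finset.mem_symmDiff,
    Finset.mem_univ, true_and]
  by_cases hx : v ∈ X <;> by_cases hy : v ∈ Y <;>
    by_cases ha : v ∈ closedOut E S <;> by_cases hb : v ∈ closedIn E T <;>
    by_cases hs : v ∈ S <;> by_cases ht : v ∈ T <;>
    simp only [hx, hy, ha, hb, hs, ht, not_true, not_false_iff, true_and, false_and,
      and_true, and_false, true_or, or_true, false_or, or_false, if_true, if_false,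
      not_or, and_self] <;>
    first
      | omega
      | (exfalso; tauto)
      | tauto

end AlmostSemicomplete
end

section
/- Let G be a digraph, S and T disjoint vertex sets, and (X,Y) a non-trivial S–T separation, i.e., an S–T separation with X∖Y ≠ S and Y∖X ≠ T. Then μ(S, Y∖X) ≥ 1 and μ(X∖Y, T) ≥ 1, where μ(S,T) = 2·|V(G) ∖ (N⁺[S] ∪ N⁻[T])| + |N⁺(S) Δ N⁻(T)| and Δ denotes symmetric difference. -/
namespace AlmostSemicomplete

variable {V : Type} [Fintype V] [DecidableEq V]

/-- For a non-trivial `S`–`T` separation `(X,Y)`, both `μ(S, Y∖X)` and `μ(X∖Y, T)`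
are at least `1`. -/
theorem mu_pos_of_nontrivial (E : V → V → Prop) [DecidableRel E] (hirr : Irreflexive E)
    (S T : Finset V) (hST : Disjoint S T)
    (X Y : Finset V) (hsep : IsSTSep E S T X Y)
    (hX : X \ Y ≠ S) (hY : Y \ X ≠ T) :
    1 ≤ mu E S (Y \ X) ∧ 1 ≤ mu E (X \ Y) T := by
  obtain ⟨⟨hcov, hsepE⟩, hSY, hTX⟩ := hsep
  have hScov : S ⊆ X \ Y := by
    intro s hs
    have hsY : s ∉ Y := fun h =>
      Finset.eq_empty_iff_forall_notMem.mp hSY s (Finset.mem_inter.mpr ⟨hs, h⟩)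
    have hmem : s ∈ X ∪ Y := by rw [hcov]; exact Finset.mem_univ s
    rcases Finset.mem_union.mp hmem with h | h
    · exact Finset.mem_sdiff.mpr ⟨h, hsY⟩
    · exact absurd h hsY
  have hTcov : T ⊆ Y \ X := by
    intro t ht
    have htX : t ∉ X := fun h =>
      Finset.eq_empty_iff_forall_notMem.mp hTX t (Finset.mem_inter.mpr ⟨ht, h⟩)
    have hmem : t ∈ X ∪ Y := by rw [hcov]; exact Finset.mem_univ t
    rcases Finset.mem_union.mp hmem with h | h
    · exact absurd h htX
    · exact Finset.mem_sdiff.mpr ⟨h, htX⟩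
  obtain ⟨v, hvX, hvS⟩ : ∃ v ∈ X \ Y, v ∉ S := by
    by_contra h; push_neg at h; exact hX (Finset.Subset.antisymm h hScov)
  obtain ⟨w, hwY, hwT⟩ : ∃ w ∈ Y \ X, w ∉ T := by
    by_contra h; push_neg at h; exact hY (Finset.Subset.antisymm h hTcov)
  obtain ⟨hvX', hvY⟩ := Finset.mem_sdiff.mp hvX
  obtain ⟨hwY', hwX⟩ := Finset.mem_sdiff.mp hwY
  have hvCI : v ∉ closedIn E (Y \ X) := by
    simp only [closedIn, Finset.mem_biUnion, Finset.mem_insert, Finset.mem_filter,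
      Finset.mem_univ, true_and, Finset.mem_sdiff]
    rintro ⟨u, ⟨huY, huX⟩, h | h⟩
    · exact hvY (h ▸ huY)
    · exact hsepE v hvX' hvY u huY huX h
  have hwCO : w ∉ closedOut E (X \ Y) := by
    simp only [closedOut, Finset.mem_biUnion, Finset.mem_insert, Finset.mem_filter,
      Finset.mem_univ, true_and, Finset.mem_sdiff]
    rintro ⟨u, ⟨huX, huY⟩, h | h⟩
    · exact hwX (h ▸ huX)
    · exact hsepE u huX huY w hwY' hwX h
  constructor
  · unfold mu
    by_cases hv : v ∈ closedOut E S
    · have hvsd : v ∈ symmDiff (openOut E S) (openIn E (Y \ X)) := by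
        rw [Finset.mem_symmDiff]
        left
        refine ⟨Finset.mem_sdiff.mpr ⟨hv, hvS⟩, ?_⟩
        intro h
        exact hvCI (Finset.mem_sdiff.mp h).1
      have : 1 ≤ (symmDiff (openOut E S) (openIn E (Y \ X))).card :=
        Finset.card_pos.mpr ⟨v, hvsd⟩
      omega
    · have hvmem : v ∈ Finset.univ \ (closedOut E S ∪ closedIn E (Y \ X)) := by
        simp only [Finset.mem_sdiff, Finset.mem_univ, Finset.mem_union, true_and]
        tauto
      have : 1 ≤ (Finset.univ \ (closedOut E S ∪ closedIn E (Y \ X))).card :=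
        Finset.card_pos.mpr ⟨v, hvmem⟩
      omega
  · unfold mu
    by_cases hw : w ∈ closedIn E T
    · have hwsd : w ∈ symmDiff (openOut E (X \ Y)) (openIn E T) := by
        rw [Finset.mem_symmDiff]
        right
        refine ⟨Finset.mem_sdiff.mpr ⟨hw, hwT⟩, ?_⟩
        intro h
        exact hwCO (Finset.mem_sdiff.mp h).1
      have : 1 ≤ (symmDiff (openOut E (X \ Y)) (openIn E T)).card :=
        Finset.card_pos.mpr ⟨w, hwsd⟩
      omega
    · have hwmem : w ∈ Finset.univ \ (closedOut E (X \ Y) ∪ closedIn E T) := by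
        simp only [Finset.mem_sdiff, Finset.mem_univ, Finset.mem_union, true_and]
        tauto
      have : 1 ≤ (Finset.univ \ (closedOut E (X \ Y) ∪ closedIn E T)).card :=
        Finset.card_pos.mpr ⟨w, hwmem⟩
      omega

end AlmostSemicomplete
end

section
/- Let G be a semicomplete digraph on n vertices and let d₁, d₂ be nonnegative integers with d₁ + d₂ < n. Then |{v ∈ V(G) : d⁺(v) ≥ d₁ and d⁻(v) ≥ d₂}| ≤ n − (d₁ + d₂) + 2·pw(G). -/
namespace AlmostSemicomplete

variable {V : Type} [Fintype V] [DecidableEq V]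

/-- In a semicomplete digraph on `n` vertices:
`|{v : d⁺(v) ≥ d₁ ∧ d⁻(v) ≥ d₂}| ≤ n − (d₁ + d₂) + 2·pw(G)` whenever `d₁ + d₂ < n`. -/
theorem card_degree_interval_le (E : V → V → Prop) [DecidableRel E]
    (hirr : Irreflexive E) (hsc : Semicomplete E)
    (n d₁ d₂ : ℕ) (hn : Fintype.card V = n) (hd : d₁ + d₂ < n) :
    (Finset.univ.filter fun v => d₁ ≤ dOutV E v ∧ d₂ ≤ dInV E v).card
      ≤ n - (d₁ + d₂) + 2 * pathwidth E := by
  classical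
  obtain ⟨p, hp⟩ : ∃ p, pathwidth E = p := ⟨_, rfl⟩
  rw [hp]
  have hne : {k | ∃ (m : ℕ) (X : Fin m → Finset V), IsPathDecomp E X ∧ pdWidth X = k}.Nonempty := by
    refine ⟨_, 1, fun _ => Finset.univ, ⟨?_, ?_, ?_⟩, rfl⟩
    · exact fun v => ⟨0, Finset.mem_univ v⟩
    · exact fun u v _ => ⟨0, 0, le_refl 0, Finset.mem_univ u, Finset.mem_univ v⟩
    · exact fun v i j k _ _ _ _ => Finset.mem_univ v
  obtain ⟨m, X, hX, hw⟩ := Nat.sInf_mem hne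
  obtain ⟨h1, h2, h3⟩ := hX
  have hw' : pdWidth X = p := by rw [← hp]; exact hw
  have hbag : ∀ i, (X i).card ≤ p + 1 := by
    intro i
    have h : (X i).card ≤ Finset.univ.sup (fun i => (X i).card) :=
      Finset.le_sup (f := fun i => (X i).card) (Finset.mem_univ i)
    unfold pdWidth at hw'
    omega
  have hV : 0 < Fintype.card V := by omega
  obtain ⟨v₀⟩ := Fintype.card_pos_iff.mp hV
  obtain ⟨i₀, _⟩ := h1 v₀
  haveI : Nonempty (Fin m) := ⟨i₀⟩
  set I : V → Finset (Fin m) := fun v => Finset.univ.filter (fun i => v ∈ X i) with hI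
  have hIne : ∀ v, (I v).Nonempty := fun v => by
    obtain ⟨i, hi⟩ := h1 v
    exact ⟨i, by simp [hI, hi]⟩
  set l : V → Fin m := fun v => (I v).min' (hIne v) with hl
  set r : V → Fin m := fun v => (I v).max' (hIne v) with hr
  have hlmem : ∀ v, v ∈ X (l v) := fun v => by
    have := (I v).min'_mem (hIne v); simpa [hI] using this
  have hrmem : ∀ v, v ∈ X (r v) := fun v => by
    have := (I v).max'_mem (hIne v); simpa [hI] using this
  have hlr : ∀ v, l v ≤ r v := fun v =>
    Finset.min'_le _ _ ((I v).max'_mem (hIne v))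
  have hmemInt : ∀ v i, l v ≤ i → i ≤ r v → v ∈ X i := fun v i hli hir =>
    h3 v (l v) i (r v) hli hir (hlmem v) (hrmem v)
  have hedge : ∀ u v, E u v → l v ≤ r u := by
    intro u v h
    obtain ⟨i, j, hji, hui, hvj⟩ := h2 u v h
    have hjv : j ∈ I v := by simp [hI, hvj]
    have hiu : i ∈ I u := by simp [hI, hui]
    calc l v ≤ j := Finset.min'_le _ _ hjv
      _ ≤ i := hji
      _ ≤ r u := Finset.le_max' _ _ hiu
  have houtc : ∀ v, d₁ ≤ dOutV E v →
      d₁ + 1 ≤ (Finset.univ.filter fun w => l w ≤ r v).card := by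
    intro v hv
    have hsub : insert v (NoutV E v) ⊆ Finset.univ.filter fun w => l w ≤ r v := by
      intro w hw
      simp only [Finset.mem_insert] at hw
      rcases hw with rfl | hw
      · simp [hlr w]
      · have hE : E v w := by simpa [NoutV] using hw
        simp [hedge v w hE]
    have hnot : v ∉ NoutV E v := by simp [NoutV, hirr v]
    have hle := Finset.card_le_card hsub
    rw [Finset.card_insert_of_notMem hnot] at hle
    unfold dOutV at hv
    omega
  have hinc : ∀ v, d₂ ≤ dInV E v →
      d₂ + 1 ≤ (Finset.univ.filter fun u => l v ≤ r u).card := by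
    intro v hv
    have hsub : insert v (NinV E v) ⊆ Finset.univ.filter fun u => l v ≤ r u := by
      intro u hu
      simp only [Finset.mem_insert] at hu
      rcases hu with rfl | hu
      · simp [hlr u]
      · have hE : E u v := by simpa [NinV] using hu
        simp [hedge u v hE]
    have hnot : v ∉ NinV E v := by simp [NinV, hirr v]
    have hle := Finset.card_le_card hsub
    rw [Finset.card_insert_of_notMem hnot] at hle
    unfold dInV at hv
    omega
  -- cut points
  set Sm : Finset (Fin m) :=
    Finset.univ.filter (fun i => d₁ + 1 ≤ (Finset.univ.filter fun w => l w ≤ i).card) with hSm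
  have hSne : Sm.Nonempty := by
    set iM := (Finset.univ : Finset (Fin m)).max' ⟨i₀, Finset.mem_univ _⟩ with hiM
    have hfil : (Finset.univ.filter fun w => l w ≤ iM) = Finset.univ :=
      Finset.filter_true_of_mem (fun w _ => Finset.le_max' _ _ (Finset.mem_univ _))
    refine ⟨iM, ?_⟩
    simp only [hSm, Finset.mem_filter, Finset.mem_univ, true_and, hfil]
    rw [Finset.card_univ, hn]; omega
  set Tm : Finset (Fin m) :=
    Finset.univ.filter (fun i => d₂ + 1 ≤ (Finset.univ.filter fun u => i ≤ r u).card) with hTm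
  have hTne : Tm.Nonempty := by
    set im := (Finset.univ : Finset (Fin m)).min' ⟨i₀, Finset.mem_univ _⟩ with him
    have hfil : (Finset.univ.filter fun u => im ≤ r u) = Finset.univ :=
      Finset.filter_true_of_mem (fun u _ => Finset.min'_le _ _ (Finset.mem_univ _))
    refine ⟨im, ?_⟩
    simp only [hTm, Finset.mem_filter, Finset.mem_univ, true_and, hfil]
    rw [Finset.card_univ, hn]; omega
  set s : Fin m := Sm.min' hSne with hs
  set t : Fin m := Tm.max' hTne with ht
  have hsc : d₁ + 1 ≤ (Finset.univ.filter fun w => l w ≤ s).card :=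
    (Finset.mem_filter.mp (Sm.min'_mem hSne)).2
  have htc : d₂ + 1 ≤ (Finset.univ.filter fun u => t ≤ r u).card :=
    (Finset.mem_filter.mp (Tm.max'_mem hTne)).2
  set W : Finset V := Finset.univ.filter (fun v => d₁ ≤ dOutV E v ∧ d₂ ≤ dInV E v) with hW
  have hWr : ∀ v ∈ W, s ≤ r v := by
    intro v hv
    rw [hW, Finset.mem_filter] at hv
    have hmem : r v ∈ Sm := by
      rw [hSm]
      simp only [Finset.mem_filter, Finset.mem_univ, true_and]
      exact houtc v hv.2.1
    exact Finset.min'_le _ _ hmem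
  have hWl : ∀ v ∈ W, l v ≤ t := by
    intro v hv
    rw [hW, Finset.mem_filter] at hv
    have hmem : l v ∈ Tm := by
      rw [hTm]
      simp only [Finset.mem_filter, Finset.mem_univ, true_and]
      exact hinc v hv.2.2
    exact Finset.le_max' _ _ hmem
  set A : Finset V := Finset.univ.filter (fun v => r v < s) with hA
  set B : Finset V := Finset.univ.filter (fun v => t < l v) with hB
  have hAcard : d₁ ≤ A.card + p := by
    have hsub : (Finset.univ.filter fun w => l w ≤ s) ⊆ A ∪ X s := by
      intro w hw
      rw [Finset.mem_filter] at hw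
      rcases lt_or_ge (r w) s with h | h
      · exact Finset.mem_union_left _ (by rw [hA]; simp [h])
      · exact Finset.mem_union_right _ (hmemInt w s hw.2 h)
    have h1' := Finset.card_le_card hsub
    have h2' := Finset.card_union_le A (X s)
    have h3' := hbag s
    omega
  have hBcard : d₂ ≤ B.card + p := by
    have hsub : (Finset.univ.filter fun u => t ≤ r u) ⊆ B ∪ X t := by
      intro u hu
      rw [Finset.mem_filter] at hu
      rcases lt_or_ge t (l u) with h | h
      · exact Finset.mem_union_left _ (by rw [hB]; simp [h])
      · exact Finset.mem_union_right _ (hmemInt u t h hu.2)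
    have h1' := Finset.card_le_card hsub
    have h2' := Finset.card_union_le B (X t)
    have h3' := hbag t
    omega
  rcases le_or_gt s t with hst | hts
  · -- s ≤ t : W, A, B are pairwise disjoint
    have hdWA : Disjoint W A := by
      rw [Finset.disjoint_left]
      intro v hvW hvA
      rw [hA, Finset.mem_filter] at hvA
      exact absurd (hWr v hvW) (not_le.mpr hvA.2)
    have hdWB : Disjoint W B := by
      rw [Finset.disjoint_left]
      intro v hvW hvB
      rw [hB, Finset.mem_filter] at hvB
      exact absurd (hWl v hvW) (not_le.mpr hvB.2)
    have hdAB : Disjoint A B := by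
      rw [Finset.disjoint_left]
      intro v hvA hvB
      rw [hA, Finset.mem_filter] at hvA
      rw [hB, Finset.mem_filter] at hvB
      have : r v < r v :=
        lt_of_lt_of_le (lt_trans (lt_of_lt_of_le hvA.2 hst) hvB.2) (hlr v)
      exact absurd this (lt_irrefl _)
    have hcu : (W ∪ A ∪ B).card = W.card + A.card + B.card := by
      rw [Finset.card_union_of_disjoint (by
        rw [Finset.disjoint_union_left]; exact ⟨hdWB, hdAB⟩),
        Finset.card_union_of_disjoint hdWA]
    have hle : (W ∪ A ∪ B).card ≤ n := by
      rw [← hn, ← Finset.card_univ]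
      exact Finset.card_le_univ _
    omega
  · -- t < s : W is contained in the bag X t
    have hWsub : W ⊆ X t := by
      intro v hv
      exact hmemInt v t (hWl v hv) (le_trans (le_of_lt hts) (hWr v hv))
    have hle : W.card ≤ p + 1 := le_trans (Finset.card_le_card hWsub) (hbag t)
    omega

end AlmostSemicomplete
end
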